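/- arXiv:2304.08358 — 4 statements merged into one kernel-verified Lean document; each statement's English description precedes it below -/
import Mathlib

section
/- Let C ∈ ℝ and let λ and η be signed Borel measures on S¹ with T_#λ = −λ and T_#η = −η. If ∫_{S¹} d_{S¹}(x,y) (λ + C·H¹)(dy) = ∫_{S¹} d_{S¹}(x,y) (η + C·H¹)(dy) for all x ∈ S¹, then λ = η. -/
open MeasureTheory Real Filter Set Complex
open scoped ENNReal NNReal Classical

noncomputable section

instance : MeasurableSpace Circle := borel Circle
instance : BorelSpace Circle := ⟨rfl⟩

namespace CirclePaper

/-- The spherical (arc-length) distance on the unit circle `S¹ ⊆ ℝ² ≃ ℂ`: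
`d_{S¹}(x,y) = arccos ⟨x,y⟩ = arccos (Re (x * conj y))`. -/
def dS1 (x y : Circle) : ℝ := Real.arccos (((x : ℂ) * (starRingEnd ℂ) (y : ℂ)).re)

/-- The antipodal map `T x = -x` (multiplication by `exp(iπ) = -1`). -/
def antipode (x : Circle) : Circle := Circle.exp π * x

/-- Integral of a function against a signed measure (via the Jordan decomposition). -/
def sInt (l : SignedMeasure Circle) (f : Circle → ℝ) : ℝ :=
  (∫ y, f y ∂l.toJordanDecomposition.posPart) - (∫ y, f y ∂l.toJordanDecomposition.negPart)

/-- `f_λ(x) = ∫_{S¹} d_{S¹}(x,y) λ(dy)`. -/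
def fRep (l : SignedMeasure Circle) (x : Circle) : ℝ := sInt l (fun y => dS1 x y)

/-- `f : S¹ → ℝ` has left derivative `L` at `x` w.r.t. the covering `q(t) = exp(it)`,
i.e. `(f(x +_q t) - f(x))/t → L` as `t → 0⁻`. -/
def HasLeftDerivCircleAt (f : Circle → ℝ) (L : ℝ) (x : Circle) : Prop :=
  Filter.Tendsto (fun t : ℝ => (f (Circle.exp t * x) - f x) / t)
    (nhdsWithin 0 (Set.Iio 0)) (nhds L)

/-- `h : ℝ → ℝ` has left derivative `L` at `t`: `(h(t+s) - h(t))/s → L` as `s → 0⁻`. -/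
def HasLeftDerivAtR (h : ℝ → ℝ) (L : ℝ) (t : ℝ) : Prop :=
  Filter.Tendsto (fun s : ℝ => (h (t + s) - h t) / s)
    (nhdsWithin 0 (Set.Iio 0)) (nhds L)

/-- The total variation `‖g‖_{TV(S¹)}` of `g : S¹ → ℝ`: the supremum of
`Σ |g(q(t_i)) - g(q(t_{i+1}))|` over partitions `0 = t_0 ≤ … ≤ t_{n+1} = 2π`. -/
def circleTV (g : Circle → ℝ) : ℝ≥0∞ := eVariationOn (g ∘ Circle.exp) (Set.Icc 0 (2 * π))

/-- `f` is Lipschitz continuous with respect to the spherical distance. -/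
def LipschitzCircle (f : Circle → ℝ) : Prop := ∃ K : ℝ, ∀ x y, |f x - f y| ≤ K * dS1 x y

/-- The normalized Hausdorff 1-measure on `S¹`, i.e. the rotation-invariant Borel
probability measure (the pushforward of normalized Lebesgue measure on `[0, 2π)`). -/
def hausOne : Measure Circle :=
  (ENNReal.ofReal (2 * π))⁻¹ • Measure.map Circle.exp (volume.restrict (Set.Ico 0 (2 * π)))

instance : IsFiniteMeasure hausOne := by
  constructor
  have h1 : (Measure.map Circle.exp (volume.restrict (Set.Ico 0 (2 * π)))) Set.univ
      = volume (Set.Ico 0 (2 * π)) := by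
    rw [Measure.map_apply Circle.exp.continuous.measurable MeasurableSet.univ]
    simp
  simp only [hausOne, Measure.smul_apply, smul_eq_mul, h1, Real.volume_Ico]
  refine ENNReal.mul_lt_top ?_ ?_
  · exact ENNReal.inv_lt_top.mpr (ENNReal.ofReal_pos.mpr (by positivity))
  · exact ENNReal.ofReal_lt_top

/-- The half-open arc `[x, T(x)) = {x +_q t : t ∈ [0, π)}` of length `π` starting at `x`. -/
def halfArc (x : Circle) : Set Circle := (fun t : ℝ => Circle.exp t * x) '' Set.Ico 0 π

/-- A Borel measure on the circle, regarded as a signed measure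
(defined to be `0` if the measure is not finite). -/
def msigned (μ : Measure Circle) : SignedMeasure Circle :=
  if h : IsFiniteMeasure μ then @Measure.toSignedMeasure _ _ μ h else 0

section Aux

lemma acos_cos_abs {s : ℝ} (hs : |s| ≤ π) : Real.arccos (Real.cos s) = |s| := by
  rw [← Real.cos_abs]; exact Real.arccos_cos (abs_nonneg s) hs

lemma acos_cos_big {s : ℝ} (h1 : π ≤ s) (h2 : s ≤ 2 * π) :
    Real.arccos (Real.cos s) = 2 * π - s := by
  rw [← Real.cos_two_pi_sub, Real.arccos_cos (by linarith) (by linarith)]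

lemma key_ident_nonneg {s h : ℝ} (hs0 : 0 ≤ s) (hs : s ≤ π) (h0 : 0 ≤ h) (hh : h ≤ π) :
    Real.arccos (Real.cos (s + h)) + Real.arccos (Real.cos (s - h))
      + 2 * max (h - (π - Real.arccos (Real.cos s))) 0
    = 2 * max (h - Real.arccos (Real.cos s)) 0 + 2 * Real.arccos (Real.cos s) := by
  have hcs : Real.arccos (Real.cos s) = s := Real.arccos_cos hs0 hs
  have hsub : Real.arccos (Real.cos (s - h)) = |s - h| :=
    acos_cos_abs (abs_le.mpr ⟨by linarith, by linarith⟩)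
  rcases le_or_gt (s + h) π with hc | hc
  · have hadd : Real.arccos (Real.cos (s + h)) = s + h := Real.arccos_cos (by linarith) hc
    rcases le_total h s with h1 | h1
    · rw [hadd, hsub, hcs, _root_.abs_of_nonneg (by linarith : (0:ℝ) ≤ s - h),
        max_eq_right (by linarith : h - (π - s) ≤ 0), max_eq_right (by linarith : h - s ≤ 0)]
      ring
    · rw [hadd, hsub, hcs, _root_.abs_of_nonpos (by linarith : s - h ≤ 0),
        max_eq_right (by linarith : h - (π - s) ≤ 0), max_eq_left (by linarith : (0:ℝ) ≤ h - s)]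
      ring
  · have hadd : Real.arccos (Real.cos (s + h)) = 2 * π - (s + h) :=
      acos_cos_big hc.le (by linarith)
    have hmx : max (h - (π - s)) 0 = h - (π - s) := max_eq_left (by linarith)
    rcases le_total h s with h1 | h1
    · rw [hadd, hsub, hcs, _root_.abs_of_nonneg (by linarith : (0:ℝ) ≤ s - h), hmx,
        max_eq_right (by linarith : h - s ≤ 0)]
      ring
    · rw [hadd, hsub, hcs, _root_.abs_of_nonpos (by linarith : s - h ≤ 0), hmx,
        max_eq_left (by linarith : (0:ℝ) ≤ h - s)]
      ring

lemma key_ident {s h : ℝ} (hs : |s| ≤ π) (h0 : 0 ≤ h) (hh : h ≤ π) :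
    Real.arccos (Real.cos (s + h)) + Real.arccos (Real.cos (s - h))
      + 2 * max (h - (π - Real.arccos (Real.cos s))) 0
    = 2 * max (h - Real.arccos (Real.cos s)) 0 + 2 * Real.arccos (Real.cos s) := by
  rcases le_total 0 s with hs0 | hs0
  · exact key_ident_nonneg hs0 (abs_le.mp hs).2 h0 hh
  · have h1 := key_ident_nonneg (neg_nonneg.mpr hs0)
      (by linarith [(abs_le.mp hs).1]) h0 hh
    have e1 : -s + h = -(s - h) := by ring
    have e2 : -s - h = -(s + h) := by ring
    rw [e1, e2, Real.cos_neg, Real.cos_neg, Real.cos_neg] at h1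
    linarith

lemma abs_w (x y : Circle) : ‖(x : ℂ) * (starRingEnd ℂ) (y : ℂ)‖ = 1 := by
  rw [norm_mul, Complex.norm_conj]
  rw [Circle.norm_coe, Circle.norm_coe, one_mul]

lemma w_ne_zero (x y : Circle) : (x : ℂ) * (starRingEnd ℂ) (y : ℂ) ≠ 0 := by
  intro h
  have := abs_w x y
  rw [h] at this
  simp at this

lemma dS1_eq_acos_cos (x y : Circle) :
    dS1 x y = Real.arccos (Real.cos (Complex.arg ((x : ℂ) * (starRingEnd ℂ) (y : ℂ)))) := by
  unfold dS1
  rw [Complex.cos_arg (w_ne_zero x y), abs_w, div_one]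

lemma w_eq_exp (x y : Circle) :
    (x : ℂ) * (starRingEnd ℂ) (y : ℂ)
      = Complex.exp ((Complex.arg ((x : ℂ) * (starRingEnd ℂ) (y : ℂ)) : ℂ) * Complex.I) := by
  conv_lhs => rw [← Complex.norm_mul_exp_arg_mul_I ((x : ℂ) * (starRingEnd ℂ) (y : ℂ))]
  rw [abs_w, ofReal_one, one_mul]

lemma dS1_exp_mul (t : ℝ) (x y : Circle) :
    dS1 (Circle.exp t * x) y
      = Real.arccos (Real.cos (t + Complex.arg ((x : ℂ) * (starRingEnd ℂ) (y : ℂ)))) := by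
  unfold dS1
  have key : (x : ℂ) * (starRingEnd ℂ) (y : ℂ)
      = Complex.exp ((Complex.arg ((x : ℂ) * (starRingEnd ℂ) (y : ℂ)) : ℂ) * Complex.I) :=
    w_eq_exp x y
  generalize hs : Complex.arg ((x : ℂ) * (starRingEnd ℂ) (y : ℂ)) = s at key ⊢
  have h1 : ((Circle.exp t * x : Circle) : ℂ) * (starRingEnd ℂ) (y : ℂ)
      = Complex.exp ((↑(t + s) : ℂ) * Complex.I) := by
    rw [Circle.coe_mul, Circle.coe_exp, mul_assoc, key, ← Complex.exp_add]
    congr 1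
    push_cast
    ring
  rw [h1]
  rw [Complex.exp_ofReal_mul_I_re]

lemma coe_antipode (x : Circle) : (antipode x : ℂ) = -(x : ℂ) := by
  unfold antipode
  rw [Circle.coe_mul, Circle.coe_exp, Complex.exp_pi_mul_I]
  ring

lemma dS1_antipode_left (x y : Circle) : dS1 (antipode x) y = π - dS1 x y := by
  unfold dS1
  rw [coe_antipode, neg_mul, Complex.neg_re, Real.arccos_neg]

lemma dS1_antipode_right (x y : Circle) : dS1 x (antipode y) = π - dS1 x y := by
  unfold dS1
  rw [coe_antipode, map_neg, mul_neg, Complex.neg_re, Real.arccos_neg]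

lemma tent_circle (x y : Circle) {h : ℝ} (h0 : 0 ≤ h) (hh : h ≤ π) :
    dS1 (Circle.exp h * x) y + dS1 (Circle.exp (-h) * x) y
      + 2 * max (h - dS1 (antipode x) y) 0
    = 2 * max (h - dS1 x y) 0 + 2 * dS1 x y := by
  set s := Complex.arg ((x : ℂ) * (starRingEnd ℂ) (y : ℂ)) with hs_def
  have hs : |s| ≤ π := Complex.abs_arg_le_pi _
  have e0 : dS1 x y = Real.arccos (Real.cos s) := dS1_eq_acos_cos x y
  have e1 : dS1 (Circle.exp h * x) y = Real.arccos (Real.cos (s + h)) := by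
    rw [dS1_exp_mul, add_comm]
  have e2 : dS1 (Circle.exp (-h) * x) y = Real.arccos (Real.cos (s - h)) := by
    rw [dS1_exp_mul]
    congr 1
    rw [show -h + s = -(h - s) by ring, Real.cos_neg, show h - s = -(s-h) by ring, Real.cos_neg]
  have e3 : dS1 (antipode x) y = π - Real.arccos (Real.cos s) := by
    rw [dS1_antipode_left, e0]
  rw [e0, e1, e2, e3]
  exact key_ident hs h0 hh

lemma dS1_nonneg (x y : Circle) : 0 ≤ dS1 x y := Real.arccos_nonneg _

lemma dS1_eq_zero_iff {x y : Circle} : dS1 x y = 0 ↔ x = y := by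
  constructor
  · intro h
    have h1 : (1 : ℝ) ≤ ((x : ℂ) * (starRingEnd ℂ) (y : ℂ)).re := Real.arccos_eq_zero.mp h
    have h2 : ((x : ℂ) * (starRingEnd ℂ) (y : ℂ)).re ≤ 1 := by
      have := Complex.re_le_norm ((x : ℂ) * (starRingEnd ℂ) (y : ℂ))
      rwa [abs_w] at this
    have hre : ((x : ℂ) * (starRingEnd ℂ) (y : ℂ)).re = 1 := le_antisymm h2 h1
    have him : ((x : ℂ) * (starRingEnd ℂ) (y : ℂ)).im = 0 := by
      have hn : Complex.normSq ((x : ℂ) * (starRingEnd ℂ) (y : ℂ)) = 1 := by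
        rw [← Complex.sq_norm, abs_w]; norm_num
      rw [Complex.normSq_apply, hre] at hn
      nlinarith
    have hw : (x : ℂ) * (starRingEnd ℂ) (y : ℂ) = 1 := by
      apply Complex.ext <;> simp [hre, him]
    have hy : ((y : ℂ)) * (starRingEnd ℂ) (y : ℂ) = 1 := by
      rw [Complex.mul_conj]
      norm_cast
      rw [← Complex.sq_norm]
      simp [Circle.norm_coe]
    have : (x : ℂ) = (y : ℂ) := by
      calc (x : ℂ) = (x : ℂ) * ((starRingEnd ℂ) (y : ℂ) * (y:ℂ)) := by
            rw [mul_comm ((starRingEnd ℂ) (y:ℂ)), hy, mul_one]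
        _ = ((x : ℂ) * (starRingEnd ℂ) (y : ℂ)) * (y:ℂ) := by ring
        _ = (y : ℂ) := by rw [hw, one_mul]
    exact Subtype.ext this
  · rintro rfl
    unfold dS1
    rw [Complex.mul_conj]
    norm_cast
    rw [← Complex.sq_norm]
    simp [Real.arccos_one, Circle.norm_coe]

lemma continuous_dS1 (x : Circle) : Continuous fun y : Circle => dS1 x y := by
  unfold dS1
  exact Real.continuous_arccos.comp (Complex.continuous_re.comp
    (continuous_const.mul (Complex.continuous_conj.comp continuous_subtype_val)))

lemma dS1_exp_arg (c : ℝ) (y : Circle) :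
    dS1 (Circle.exp c) y = Real.arccos (Real.cos (c - Complex.arg (y : ℂ))) := by
  have h := dS1_exp_mul c 1 y
  rw [mul_one] at h
  rw [h]
  congr 1
  have : Complex.arg ((1 : Circle) * (starRingEnd ℂ) (y : ℂ)) = Complex.arg ((starRingEnd ℂ) (y : ℂ)) := by
    norm_num
  rw [this]
  rcases eq_or_ne (Complex.arg (y:ℂ)) π with hp | hp
  · rw [Complex.arg_conj, if_pos hp, hp]
    rw [show c - π = -(π - c) by ring, Real.cos_neg, ← Real.cos_two_pi_sub]
    congr 1
    ring
  · rw [Complex.arg_conj, if_neg hp]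
    ring_nf

end Aux

section MeasureAux

lemma integ {f : Circle → ℝ} (hf : Continuous f) (μ : Measure Circle) [IsFiniteMeasure μ] :
    Integrable f μ :=
  hf.integrable_of_hasCompactSupport (IsClosed.isCompact (isClosed_tsupport f))

lemma ennreal_add_lift {a b c d : ℝ≥0∞} (ha : a ≠ ⊤) (hb : b ≠ ⊤) (hc : c ≠ ⊤) (hd : d ≠ ⊤)
    (h : a.toReal + b.toReal = c.toReal + d.toReal) : a + b = c + d := by
  refine (ENNReal.toReal_eq_toReal_iff' (by finiteness) (by finiteness)).mp ?_
  rw [ENNReal.toReal_add ha hb, ENNReal.toReal_add hc hd]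
  exact h

lemma measure_balance {p n p' n' : Measure Circle} [IsFiniteMeasure p] [IsFiniteMeasure n]
    [IsFiniteMeasure p'] [IsFiniteMeasure n']
    (h : p.toSignedMeasure - n.toSignedMeasure = p'.toSignedMeasure - n'.toSignedMeasure) :
    p + n' = p' + n := by
  ext i hi
  rw [Measure.add_apply, Measure.add_apply]
  have h2 := congrArg (fun v : SignedMeasure Circle => v i) h
  simp only [VectorMeasure.sub_apply] at h2
  rw [Measure.toSignedMeasure_apply_measurable hi, Measure.toSignedMeasure_apply_measurable hi,
    Measure.toSignedMeasure_apply_measurable hi, Measure.toSignedMeasure_apply_measurable hi] at h2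
  exact ennreal_add_lift (measure_ne_top _ _) (measure_ne_top _ _) (measure_ne_top _ _)
    (measure_ne_top _ _) (by simp only [measureReal_def] at h2; linarith)

lemma integral_balance {p n p' n' : Measure Circle} [IsFiniteMeasure p] [IsFiniteMeasure n]
    [IsFiniteMeasure p'] [IsFiniteMeasure n'] (h : p + n' = p' + n)
    {f : Circle → ℝ} (hf : Continuous f) :
    (∫ y, f y ∂p) - ∫ y, f y ∂n = (∫ y, f y ∂p') - ∫ y, f y ∂n' := by
  have h1 : (∫ y, f y ∂(p + n')) = ∫ y, f y ∂(p' + n) := by rw [h]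
  rw [integral_add_measure (integ hf p) (integ hf n'),
    integral_add_measure (integ hf p') (integ hf n)] at h1
  linarith

lemma sInt_eq {s : SignedMeasure Circle} {p n : Measure Circle} [IsFiniteMeasure p]
    [IsFiniteMeasure n] (hs : p.toSignedMeasure - n.toSignedMeasure = s)
    {f : Circle → ℝ} (hf : Continuous f) :
    sInt s f = (∫ y, f y ∂p) - ∫ y, f y ∂n := by
  have h0 : s.toJordanDecomposition.posPart.toSignedMeasure
      - s.toJordanDecomposition.negPart.toSignedMeasure = s := by
    have := s.toSignedMeasure_toJordanDecomposition
    rwa [JordanDecomposition.toSignedMeasure] at this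
  exact integral_balance (measure_balance (h0.trans hs.symm)) hf

lemma continuous_antipode : Continuous antipode := continuous_const.mul continuous_id

lemma measurable_antipode : Measurable antipode := continuous_antipode.measurable

lemma antipode_antipode (x : Circle) : antipode (antipode x) = x := by
  unfold antipode
  rw [← mul_assoc, ← Circle.exp_add]
  have : π + π = 2 * π := by ring
  rw [this, Circle.exp_two_pi, one_mul]

lemma nnreal_smul_sm (r : ℝ≥0) (v : SignedMeasure Circle) : r • v = (r : ℝ) • v :=
  VectorMeasure.ext fun i _ => by
    rw [VectorMeasure.smul_apply, VectorMeasure.smul_apply, NNReal.smul_def]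

lemma jordan_antisym {s : SignedMeasure Circle} (hs : s.map antipode = -s) :
    s.toJordanDecomposition.posPart.map antipode + s.toJordanDecomposition.posPart
      = s.toJordanDecomposition.negPart.map antipode + s.toJordanDecomposition.negPart := by
  set p := s.toJordanDecomposition.posPart with hp
  set n := s.toJordanDecomposition.negPart with hn
  have hds : p.toSignedMeasure - n.toSignedMeasure = s := by
    have := s.toSignedMeasure_toJordanDecomposition
    rwa [JordanDecomposition.toSignedMeasure] at this
  have hps : ∀ i : Set Circle, MeasurableSet i → s i = (p i).toReal - (n i).toReal := by
    intro i hi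
    rw [← hds, VectorMeasure.sub_apply, Measure.toSignedMeasure_apply_measurable hi,
      Measure.toSignedMeasure_apply_measurable hi]
    simp only [measureReal_def]
  ext i hi
  have hpre : MeasurableSet (antipode ⁻¹' i) := measurable_antipode hi
  have h1 : s (antipode ⁻¹' i) = -s i := by
    have := congrArg (fun v : SignedMeasure Circle => v i) hs
    simp only [VectorMeasure.neg_apply] at this
    rw [VectorMeasure.map_apply _ measurable_antipode hi] at this
    exact this
  rw [hps i hi, hps _ hpre] at h1
  rw [Measure.add_apply, Measure.add_apply, Measure.map_apply measurable_antipode hi,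
    Measure.map_apply measurable_antipode hi]
  exact ennreal_add_lift (measure_ne_top _ _) (measure_ne_top _ _) (measure_ne_top _ _)
    (measure_ne_top _ _) (by linarith)

lemma key_lim (A B : Measure Circle) [IsFiniteMeasure A] [IsFiniteMeasure B]
    {s : Set Circle} (hs : MeasurableSet s) (g : ℕ → Circle → ℝ)
    (hgc : ∀ n, Continuous (g n)) (hbd : ∀ n y, |g n y| ≤ 1)
    (heq : ∀ n, (∫ y, g n y ∂A) = ∫ y, g n y ∂B)
    (hlim : ∀ y, Tendsto (fun n => g n y) atTop (nhds (s.indicator (fun _ => (1:ℝ)) y))) : A s = B s := by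
  have hA : Tendsto (fun n => ∫ y, g n y ∂A) atTop (nhds (∫ y, s.indicator (fun _ => (1:ℝ)) y ∂A)) := by
    refine tendsto_integral_of_dominated_convergence (fun _ => 1)
      (fun n => ((hgc n).aestronglyMeasurable)) (integrable_const 1)
      (fun n => ae_of_all _ fun y => by rw [Real.norm_eq_abs]; exact hbd n y)
      (ae_of_all _ hlim)
  have hB : Tendsto (fun n => ∫ y, g n y ∂B) atTop (nhds (∫ y, s.indicator (fun _ => (1:ℝ)) y ∂B)) := by
    refine tendsto_integral_of_dominated_convergence (fun _ => 1)
      (fun n => ((hgc n).aestronglyMeasurable)) (integrable_const 1)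
      (fun n => ae_of_all _ fun y => by rw [Real.norm_eq_abs]; exact hbd n y)
      (ae_of_all _ hlim)
  have hAB : (∫ y, s.indicator (fun _ => (1:ℝ)) y ∂A) = ∫ y, s.indicator (fun _ => (1:ℝ)) y ∂B := by
    refine tendsto_nhds_unique hA ?_
    simpa only [heq] using hB
  have e1 : ∀ (μ : Measure Circle), (∫ y, s.indicator (fun _ => (1:ℝ)) y ∂μ) = (μ s).toReal :=
    fun μ => integral_indicator_one hs
  rw [e1 A, e1 B] at hAB
  exact (ENNReal.toReal_eq_toReal_iff' (measure_ne_top _ _) (measure_ne_top _ _)).mp hAB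

end MeasureAux


section Main

variable (A B : Measure Circle) [IsFiniteMeasure A] [IsFiniteMeasure B]

lemma tentC_of (hR : A.map antipode + A = B.map antipode + B)
    (hstar : ∀ x : Circle, (∫ y, dS1 x y ∂A) = ∫ y, dS1 x y ∂B)
    (x : Circle) {r : ℝ} (hr0 : 0 < r) (hrπ : r ≤ π) :
    (∫ y, max (r - dS1 x y) 0 ∂A) = ∫ y, max (r - dS1 x y) 0 ∂B := by
  set t : Circle → ℝ := fun y => max (r - dS1 x y) 0 with ht_def
  set t' : Circle → ℝ := fun y => max (r - dS1 (antipode x) y) 0 with ht'_def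
  have htc : Continuous t := (continuous_const.sub (continuous_dS1 x)).max continuous_const
  have htc' : Continuous t' :=
    (continuous_const.sub (continuous_dS1 (antipode x))).max continuous_const
  have hcomp : ∀ y, t (antipode y) = t' y := by
    intro y
    simp only [ht_def, ht'_def, dS1_antipode_right, dS1_antipode_left]
  have hmap : ∀ (μ : Measure Circle), (∫ y, t y ∂(μ.map antipode)) = ∫ y, t' y ∂μ := by
    intro μ
    rw [integral_map measurable_antipode.aemeasurable htc.aestronglyMeasurable]
    exact integral_congr_ae (ae_of_all _ hcomp)
  have key : ∀ (μ : Measure Circle) [IsFiniteMeasure μ],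
      (∫ y, dS1 (Circle.exp r * x) y ∂μ) + (∫ y, dS1 (Circle.exp (-r) * x) y ∂μ)
        + 2 * ∫ y, t' y ∂μ
      = 2 * (∫ y, t y ∂μ) + 2 * ∫ y, dS1 x y ∂μ := by
    intro μ _
    have hint : (∫ y, (dS1 (Circle.exp r * x) y + dS1 (Circle.exp (-r) * x) y + 2 * t' y) ∂μ)
        = ∫ y, (2 * t y + 2 * dS1 x y) ∂μ :=
      integral_congr_ae (ae_of_all _ fun y => tent_circle x y hr0.le hrπ)
    have i1 : Integrable (fun y => dS1 (Circle.exp r * x) y) μ := integ (continuous_dS1 _) μ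
    have i2 : Integrable (fun y => dS1 (Circle.exp (-r) * x) y) μ := integ (continuous_dS1 _) μ
    have i0 : Integrable (fun y => dS1 x y) μ := integ (continuous_dS1 _) μ
    have i12 : Integrable (fun y => dS1 (Circle.exp r * x) y + dS1 (Circle.exp (-r) * x) y) μ :=
      i1.add i2
    have it' : Integrable (fun y => 2 * t' y) μ := (integ htc' μ).const_mul 2
    have it : Integrable (fun y => 2 * t y) μ := (integ htc μ).const_mul 2
    have i20 : Integrable (fun y => 2 * dS1 x y) μ := i0.const_mul 2
    rw [integral_add i12 it', integral_add i1 i2, integral_add it i20,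
      integral_const_mul, integral_const_mul, integral_const_mul] at hint
    linarith
  have h1 := key A
  have h2 := key B
  have hmapsum : (∫ y, t y ∂(A.map antipode)) + ∫ y, t y ∂A
      = (∫ y, t y ∂(B.map antipode)) + ∫ y, t y ∂B := by
    rw [← integral_add_measure (integ htc _) (integ htc _),
      ← integral_add_measure (integ htc _) (integ htc _), hR]
  rw [hmap A, hmap B] at hmapsum
  have s1 := hstar (Circle.exp r * x)
  have s2 := hstar (Circle.exp (-r) * x)
  have s0 := hstar x
  linarith

lemma ball_eq
    (htent : ∀ (x : Circle) {r : ℝ}, 0 < r → r ≤ π →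
      (∫ y, max (r - dS1 x y) 0 ∂A) = ∫ y, max (r - dS1 x y) 0 ∂B)
    (x : Circle) {r : ℝ} (hr0 : 0 < r) (hrπ : r < π) :
    A {y | dS1 x y ≤ r} = B {y | dS1 x y ≤ r} := by
  have hsm : MeasurableSet {y | dS1 x y ≤ r} :=
    measurableSet_le (continuous_dS1 x).measurable measurable_const
  set ε : ℕ → ℝ := fun n => (π - r) / (n + 1) with hε
  have hε0 : ∀ n, 0 < ε n := fun n => div_pos (by linarith) (by positivity)
  have hεπ : ∀ n, r + ε n ≤ π := by
    intro n
    have h1 : ε n ≤ π - r := by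
      rw [hε]
      exact div_le_self (by linarith) (by exact_mod_cast le_add_of_nonneg_left (Nat.cast_nonneg n))
    linarith
  have hεlim : Tendsto ε atTop (nhds 0) := by
    have he : ε = fun n : ℕ => (π - r) * (1 / (n + 1)) := funext fun n => by
      rw [hε, mul_one_div]
    rw [he]
    simpa using tendsto_one_div_add_atTop_nhds_zero_nat.const_mul (π - r)
  set g : ℕ → Circle → ℝ :=
    fun n y => (max (r + ε n - dS1 x y) 0 - max (r - dS1 x y) 0) / ε n with hg
  apply key_lim A B hsm g
  · intro n
    exact (((continuous_const.sub (continuous_dS1 x)).max continuous_const).sub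
      ((continuous_const.sub (continuous_dS1 x)).max continuous_const)).div_const _
  · intro n y
    have h1 : max (r - dS1 x y) 0 ≤ max (r + ε n - dS1 x y) 0 :=
      max_le_max (by linarith [hε0 n]) le_rfl
    have h2 : max (r + ε n - dS1 x y) 0 ≤ max (r - dS1 x y) 0 + ε n := by
      apply max_le
      · linarith [le_max_left (r - dS1 x y) 0]
      · linarith [le_max_right (r - dS1 x y) 0, hε0 n]
    have hnum : 0 ≤ max (r + ε n - dS1 x y) 0 - max (r - dS1 x y) 0 := by linarith
    simp only [hg]
    rw [abs_div, _root_.abs_of_nonneg hnum, _root_.abs_of_pos (hε0 n), div_le_one (hε0 n)]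
    linarith
  · intro n
    have e1 := htent x hr0 hrπ.le
    have e2 := htent x (r := r + ε n) (by linarith [hε0 n]) (hεπ n)
    simp only [hg, div_eq_mul_inv]
    rw [integral_mul_const, integral_mul_const,
      integral_sub (integ (f := fun y => max (r + ε n - dS1 x y) 0) ((continuous_const.sub (continuous_dS1 x)).max continuous_const) A)
        (integ (f := fun y => max (r - dS1 x y) 0) ((continuous_const.sub (continuous_dS1 x)).max continuous_const) A),
      integral_sub (integ (f := fun y => max (r + ε n - dS1 x y) 0) ((continuous_const.sub (continuous_dS1 x)).max continuous_const) B)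
        (integ (f := fun y => max (r - dS1 x y) 0) ((continuous_const.sub (continuous_dS1 x)).max continuous_const) B),
      e1, e2]
  · intro y
    by_cases hy : dS1 x y ≤ r
    · have hval : ∀ n, g n y = 1 := by
        intro n
        have h1 : max (r + ε n - dS1 x y) 0 = r + ε n - dS1 x y :=
          max_eq_left (by linarith [hε0 n])
        have h2 : max (r - dS1 x y) 0 = r - dS1 x y := max_eq_left (by linarith)
        simp only [hg]
        rw [h1, h2, div_eq_one_iff_eq (hε0 n).ne']
        ring
      rw [indicator_of_mem (show y ∈ {y | dS1 x y ≤ r} from hy)]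
      simp only [hval]
      exact tendsto_const_nhds
    · push_neg at hy
      rw [indicator_of_notMem (show y ∉ {y | dS1 x y ≤ r} from not_le.mpr hy)]
      have hev : ∀ᶠ n in atTop, g n y = 0 := by
        filter_upwards [hεlim.eventually_lt_const (show (0:ℝ) < dS1 x y - r by linarith)]
          with n hn
        have h1 : max (r + ε n - dS1 x y) 0 = 0 := max_eq_right (by linarith)
        have h2 : max (r - dS1 x y) 0 = 0 := max_eq_right (by linarith)
        simp only [hg]
        rw [h1, h2]
        simp
      exact Tendsto.congr' (hev.mono fun n hn => hn.symm) tendsto_const_nhds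

lemma sing_eq
    (htent : ∀ (x : Circle) {r : ℝ}, 0 < r → r ≤ π →
      (∫ y, max (r - dS1 x y) 0 ∂A) = ∫ y, max (r - dS1 x y) 0 ∂B)
    (x : Circle) : A {x} = B {x} := by
  have hsm : MeasurableSet ({x} : Set Circle) := measurableSet_singleton x
  set ρ : ℕ → ℝ := fun n => π / (n + 1) with hρ
  have hρ0 : ∀ n, 0 < ρ n := fun n => div_pos Real.pi_pos (by positivity)
  have hρπ : ∀ n, ρ n ≤ π := fun n =>
    div_le_self Real.pi_pos.le (by exact_mod_cast le_add_of_nonneg_left (Nat.cast_nonneg n))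
  have hρlim : Tendsto ρ atTop (nhds 0) := by
    have he : ρ = fun n : ℕ => π * (1 / (n + 1)) := funext fun n => by rw [hρ, mul_one_div]
    rw [he]
    simpa using tendsto_one_div_add_atTop_nhds_zero_nat.const_mul π
  set g : ℕ → Circle → ℝ := fun n y => max (ρ n - dS1 x y) 0 / ρ n with hg
  apply key_lim A B hsm g
  · intro n
    exact ((continuous_const.sub (continuous_dS1 x)).max continuous_const).div_const _
  · intro n y
    have h1 : max (ρ n - dS1 x y) 0 ≤ ρ n := by
      apply max_le
      · linarith [dS1_nonneg x y]
      · exact (hρ0 n).le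
    have h2 : (0:ℝ) ≤ max (ρ n - dS1 x y) 0 := le_max_right _ _
    simp only [hg]
    rw [abs_div, _root_.abs_of_nonneg h2, _root_.abs_of_pos (hρ0 n), div_le_one (hρ0 n)]
    exact h1
  · intro n
    have e := htent x (hρ0 n) (hρπ n)
    simp only [hg, div_eq_mul_inv]
    rw [integral_mul_const, integral_mul_const, e]
  · intro y
    by_cases hy : y = x
    · have hd : dS1 x y = 0 := dS1_eq_zero_iff.mpr hy.symm
      have hval : ∀ n, g n y = 1 := by
        intro n
        simp only [hg, hd, sub_zero]
        rw [max_eq_left (hρ0 n).le, div_self (hρ0 n).ne']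
      rw [indicator_of_mem (show y ∈ ({x} : Set Circle) from hy)]
      simp only [hval]
      exact tendsto_const_nhds
    · rw [indicator_of_notMem (show y ∉ ({x} : Set Circle) from hy)]
      have hd0 : 0 < dS1 x y := by
        rcases lt_or_eq_of_le (dS1_nonneg x y) with h | h
        · exact h
        · exact absurd (dS1_eq_zero_iff.mp h.symm).symm hy
      have hev : ∀ᶠ n in atTop, g n y = 0 := by
        filter_upwards [hρlim.eventually_lt_const hd0] with n hn
        simp only [hg]
        rw [max_eq_right (by linarith), zero_div]
      exact Tendsto.congr' (hev.mono fun n hn => hn.symm) tendsto_const_nhds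

lemma measures_eq
    (hball : ∀ (x : Circle) {r : ℝ}, 0 < r → r < π →
      A {y | dS1 x y ≤ r} = B {y | dS1 x y ≤ r})
    (hsing : ∀ x : Circle, A {x} = B {x})
    (huniv : A univ = B univ) : A = B := by
  have hcoe : Measurable (fun y : Circle => (y : ℂ)) := by
    apply Continuous.measurable
    exact continuous_subtype_val
  have hargm : Measurable fun y : Circle => Complex.arg (y : ℂ) :=
    Complex.measurable_arg.comp hcoe
  have hmapeq : A.map (fun y : Circle => Complex.arg (y : ℂ))
      = B.map (fun y : Circle => Complex.arg (y : ℂ)) := by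
    apply Measure.ext_of_Iic
    intro a
    rw [Measure.map_apply hargm measurableSet_Iic, Measure.map_apply hargm measurableSet_Iic]
    rcases le_or_gt π a with ha | ha
    · have hseteq : (fun y : Circle => Complex.arg (y : ℂ)) ⁻¹' Iic a = univ :=
        eq_univ_of_forall fun y => (Complex.arg_le_pi _).trans ha
      rw [hseteq]
      exact huniv
    rcases le_or_gt a (-π) with ha2 | ha2
    · have hseteq : (fun y : Circle => Complex.arg (y : ℂ)) ⁻¹' Iic a = ∅ := by
        apply eq_empty_iff_forall_notMem.mpr
        intro y hy
        exact absurd (mem_Iic.mp hy) (not_le.mpr (lt_of_le_of_lt ha2 (Complex.neg_pi_lt_arg _)))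
      rw [hseteq]
      simp
    · set c : ℝ := (a - π) / 2 with hc
      set r : ℝ := (π + a) / 2 with hr
      have hr0 : 0 < r := by rw [hr]; linarith
      have hrπ : r < π := by rw [hr]; linarith [Real.pi_pos]
      set x₀ := Circle.exp c with hx₀
      set pt := antipode 1 with hpt
      have hptarg : Complex.arg ((pt : ℂ)) = π := by
        rw [hpt, coe_antipode]
        norm_num [Complex.arg_neg_one]
      have hypt : ∀ y : Circle, y = pt ↔ Complex.arg (y : ℂ) = π := by
        intro y
        constructor
        · rintro rfl; exact hptarg
        · intro hyp
          exact Circle.arg_eq_arg.mp (hyp.trans hptarg.symm)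
      have hdx : ∀ y : Circle, dS1 x₀ y = Real.arccos (Real.cos (c - Complex.arg (y : ℂ))) :=
        fun y => dS1_exp_arg c y
      have hseteq : (fun y : Circle => Complex.arg (y : ℂ)) ⁻¹' Iic a
          = {y | dS1 x₀ y ≤ r} \ {pt} := by
        ext y
        simp only [mem_preimage, mem_Iic, mem_diff, mem_setOf_eq, mem_singleton_iff]
        have ht1 : -π < Complex.arg (y : ℂ) := Complex.neg_pi_lt_arg _
        have ht2 : Complex.arg (y : ℂ) ≤ π := Complex.arg_le_pi _
        have hcr : c - r = -π := by rw [hc, hr]; ring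
        have hcr2 : c + 2 * π - r = π := by rw [hc, hr]; ring
        have hca : c - a = -r := by rw [hc, hr]; ring
        have hcπ : c + π = r := by rw [hc, hr]; ring
        set t := Complex.arg (y : ℂ) with htdef
        constructor
        · intro hta
          have htr : t ≤ r := by rw [hr]; linarith
          have habs : |c - t| ≤ π := abs_le.mpr ⟨by linarith, by linarith⟩
          refine ⟨?_, ?_⟩
          · rw [hdx y, ← htdef, acos_cos_abs habs]
            exact abs_le.mpr ⟨by linarith, by linarith⟩
          · intro hyeq
            have := (hypt y).mp hyeq
            rw [← htdef] at this
            linarith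
        · rintro ⟨hballm, hne⟩
          by_contra hta
          push_neg at hta
          rcases le_or_gt t r with h1 | h1
          · have habs : |c - t| ≤ π := abs_le.mpr ⟨by linarith, by linarith⟩
            rw [hdx y, ← htdef, acos_cos_abs habs] at hballm
            have h3 : c - t < -r := by linarith
            have h4 := neg_le_abs (c - t)
            linarith
          · have habs : |c - t + 2 * π| ≤ π := abs_le.mpr ⟨by linarith, by linarith⟩
            rw [hdx y, ← htdef, ← Real.cos_add_two_pi, acos_cos_abs habs] at hballm
            have h2 := le_abs_self (c - t + 2 * π)
            have htπ : t = π := le_antisymm ht2 (by linarith)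
            exact hne ((hypt y).mpr (htdef ▸ htπ))
      rw [hseteq]
      have hptball : pt ∈ {y | dS1 x₀ y ≤ r} := by
        rw [mem_setOf_eq, hdx pt, hptarg]
        have he : c - π + 2 * π = c + π := by ring
        have habs : |c - π + 2 * π| ≤ π := by
          rw [he]
          rw [hc]
          rw [abs_le]
          constructor <;> linarith [Real.pi_pos]
        rw [← Real.cos_add_two_pi, acos_cos_abs habs, he]
        have : |c + π| = c + π := _root_.abs_of_nonneg (by rw [hc]; linarith)
        rw [this, hc, hr]
        linarith
      rw [measure_diff (singleton_subset_iff.mpr hptball)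
          (measurableSet_singleton pt).nullMeasurableSet (measure_ne_top A _),
        measure_diff (singleton_subset_iff.mpr hptball)
          (measurableSet_singleton pt).nullMeasurableSet (measure_ne_top B _),
        hball x₀ hr0 hrπ, hsing pt]
  have hrec : ∀ (μ : Measure Circle),
      ((μ.map (fun y : Circle => Complex.arg (y : ℂ))).map (fun s : ℝ => Circle.exp s)) = μ := by
    intro μ
    have hexpm : Measurable (fun s : ℝ => Circle.exp s) := by
      apply Continuous.measurable
      exact Circle.exp.continuous
    rw [Measure.map_map hexpm hargm]
    have hid : ((fun s : ℝ => Circle.exp s) ∘ fun y : Circle => Complex.arg (y : ℂ))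
        = id := funext fun y => Circle.exp_arg y
    rw [hid, Measure.map_id]
  rw [← hrec A, ← hrec B, hmapeq]

end Main


lemma main_core (p1 n1 p2 n2 : Measure Circle) [IsFiniteMeasure p1] [IsFiniteMeasure n1]
    [IsFiniteMeasure p2] [IsFiniteMeasure n2]
    (star : ∀ x : Circle, (∫ y, dS1 x y ∂(p1 + n2)) = ∫ y, dS1 x y ∂(p2 + n1))
    (R1 : p1.map antipode + p1 = n1.map antipode + n1)
    (R2 : p2.map antipode + p2 = n2.map antipode + n2) :
    p1 + n2 = p2 + n1 := by
  have R : (p1 + n2).map antipode + (p1 + n2) = (p2 + n1).map antipode + (p2 + n1) := by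
    rw [Measure.map_add _ _ measurable_antipode, Measure.map_add _ _ measurable_antipode]
    calc Measure.map antipode p1 + Measure.map antipode n2 + (p1 + n2)
        = (Measure.map antipode p1 + p1) + (Measure.map antipode n2 + n2) := by abel
      _ = (Measure.map antipode n1 + n1) + (Measure.map antipode n2 + n2) := by rw [R1]
      _ = (Measure.map antipode n1 + n1) + (Measure.map antipode p2 + p2) := by rw [← R2]
      _ = Measure.map antipode p2 + Measure.map antipode n1 + (p2 + n1) := by abel
  have huniv : (p1 + n2) univ = (p2 + n1) univ := by
    have h2 : ((p1 + n2).map antipode) univ + (p1 + n2) univ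
        = ((p2 + n1).map antipode) univ + (p2 + n1) univ := by
      rw [← Measure.add_apply, ← Measure.add_apply, R]
    rw [Measure.map_apply measurable_antipode MeasurableSet.univ, preimage_univ,
      Measure.map_apply measurable_antipode MeasurableSet.univ, preimage_univ] at h2
    have ha := measure_ne_top (p1 + n2) univ
    have hb := measure_ne_top (p2 + n1) univ
    have h3 := congrArg ENNReal.toReal h2
    rw [ENNReal.toReal_add ha ha, ENNReal.toReal_add hb hb] at h3
    exact (ENNReal.toReal_eq_toReal_iff' ha hb).mp (by linarith)
  have htent : ∀ (x : Circle) {r : ℝ}, 0 < r → r ≤ π →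
      (∫ y, max (r - dS1 x y) 0 ∂(p1 + n2)) = ∫ y, max (r - dS1 x y) 0 ∂(p2 + n1) :=
    fun x {r} h1 h2 => tentC_of (p1 + n2) (p2 + n1) R star x h1 h2
  exact measures_eq _ _ (fun x {r} hr0 hrπ => ball_eq _ _ htent x hr0 hrπ)
    (fun x => sing_eq _ _ htent x) huniv


/-- If `T_#λ = -λ`, `T_#η = -η` and `f_{λ + C·H¹} = f_{η + C·H¹}`,
then `λ = η`. -/
theorem stmt2 (C : ℝ) (lam eta : SignedMeasure Circle)
    (hlam : lam.map antipode = -lam) (heta : eta.map antipode = -eta)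
    (h : ∀ x : Circle,
      fRep (lam + C • hausOne.toSignedMeasure) x = fRep (eta + C • hausOne.toSignedMeasure) x) :
    lam = eta := by
  have hlamd : lam.toJordanDecomposition.posPart.toSignedMeasure
      - lam.toJordanDecomposition.negPart.toSignedMeasure = lam := by
    have := lam.toSignedMeasure_toJordanDecomposition
    rwa [JordanDecomposition.toSignedMeasure] at this
  have hetad : eta.toJordanDecomposition.posPart.toSignedMeasure
      - eta.toJordanDecomposition.negPart.toSignedMeasure = eta := by
    have := eta.toSignedMeasure_toJordanDecomposition
    rwa [JordanDecomposition.toSignedMeasure] at this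
  have hCr : ((C.toNNReal : ℝ)) - (((-C).toNNReal : ℝ)) = C := by
    rcases le_total 0 C with hC | hC
    · rw [Real.coe_toNNReal C hC, Real.toNNReal_of_nonpos (by linarith)]
      simp
    · rw [Real.toNNReal_of_nonpos hC, Real.coe_toNNReal (-C) (by linarith)]
      simp
  have hCH : C • hausOne.toSignedMeasure
      = (C.toNNReal • hausOne).toSignedMeasure - ((-C).toNNReal • hausOne).toSignedMeasure := by
    rw [Measure.toSignedMeasure_smul, Measure.toSignedMeasure_smul, nnreal_smul_sm, nnreal_smul_sm]
    conv_lhs => rw [← hCr]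
    exact sub_smul (C.toNNReal : ℝ) ((-C).toNNReal : ℝ) hausOne.toSignedMeasure
  have key1 : (lam.toJordanDecomposition.posPart + C.toNNReal • hausOne).toSignedMeasure
      - (lam.toJordanDecomposition.negPart + (-C).toNNReal • hausOne).toSignedMeasure
      = lam + C • hausOne.toSignedMeasure := by
    rw [Measure.toSignedMeasure_add, Measure.toSignedMeasure_add, hCH]
    conv_rhs => rw [← hlamd]
    abel
  have key2 : (eta.toJordanDecomposition.posPart + C.toNNReal • hausOne).toSignedMeasure
      - (eta.toJordanDecomposition.negPart + (-C).toNNReal • hausOne).toSignedMeasure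
      = eta + C • hausOne.toSignedMeasure := by
    rw [Measure.toSignedMeasure_add, Measure.toSignedMeasure_add, hCH]
    conv_rhs => rw [← hetad]
    abel
  have star : ∀ x : Circle,
      (∫ y, dS1 x y ∂(lam.toJordanDecomposition.posPart + eta.toJordanDecomposition.negPart))
      = ∫ y, dS1 x y ∂(eta.toJordanDecomposition.posPart + lam.toJordanDecomposition.negPart) := by
    intro x
    have hfc : Continuous fun y => dS1 x y := continuous_dS1 x
    have e1 : fRep (lam + C • hausOne.toSignedMeasure) x
        = (∫ y, dS1 x y ∂(lam.toJordanDecomposition.posPart + C.toNNReal • hausOne))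
          - ∫ y, dS1 x y ∂(lam.toJordanDecomposition.negPart + (-C).toNNReal • hausOne) :=
      sInt_eq key1 hfc
    have e2 : fRep (eta + C • hausOne.toSignedMeasure) x
        = (∫ y, dS1 x y ∂(eta.toJordanDecomposition.posPart + C.toNNReal • hausOne))
          - ∫ y, dS1 x y ∂(eta.toJordanDecomposition.negPart + (-C).toNNReal • hausOne) :=
      sInt_eq key2 hfc
    have h3 := h x
    rw [e1, e2, integral_add_measure (integ hfc _) (integ hfc _),
      integral_add_measure (integ hfc _) (integ hfc _),
      integral_add_measure (integ hfc _) (integ hfc _),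
      integral_add_measure (integ hfc _) (integ hfc _)] at h3
    rw [integral_add_measure (integ hfc _) (integ hfc _),
      integral_add_measure (integ hfc _) (integ hfc _)]
    linarith
  have R1 := jordan_antisym hlam
  have R2 := jordan_antisym heta
  have hAB := main_core _ _ _ _ star R1 R2
  apply VectorMeasure.ext
  intro i hi
  have h4 : lam.toJordanDecomposition.posPart i + eta.toJordanDecomposition.negPart i
      = eta.toJordanDecomposition.posPart i + lam.toJordanDecomposition.negPart i := by
    rw [← Measure.add_apply, ← Measure.add_apply, hAB]
  have e1 : lam i = (lam.toJordanDecomposition.posPart i).toReal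
      - (lam.toJordanDecomposition.negPart i).toReal := by
    conv_lhs => rw [← hlamd]
    rw [VectorMeasure.sub_apply, Measure.toSignedMeasure_apply_measurable hi,
      Measure.toSignedMeasure_apply_measurable hi]
    simp only [measureReal_def]
  have e2 : eta i = (eta.toJordanDecomposition.posPart i).toReal
      - (eta.toJordanDecomposition.negPart i).toReal := by
    conv_lhs => rw [← hetad]
    rw [VectorMeasure.sub_apply, Measure.toSignedMeasure_apply_measurable hi,
      Measure.toSignedMeasure_apply_measurable hi]
    simp only [measureReal_def]
  rw [e1, e2]
  have h5 := congrArg ENNReal.toReal h4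
  rw [ENNReal.toReal_add (measure_ne_top _ _) (measure_ne_top _ _),
    ENNReal.toReal_add (measure_ne_top _ _) (measure_ne_top _ _)] at h5
  linarith

end CirclePaper
end
end

section
/- Let h : ℝ → ℝ be Lipschitz continuous, left-differentiable at every point (with left derivative ∂₋h), and suppose ∂₋h has finite total variation on [−π, π]. Then the restriction of h to [−π, π] can be written as the difference of two convex functions, and ∂₋h is left-continuous on (−π, π]. -/
open MeasureTheory Real Filter Set Complex
open scoped ENNReal NNReal Classical

noncomputable section

namespace CirclePaper

section Aux9

lemma aux_measurable (h : ℝ → ℝ) (hc : Continuous h) (h' : ℝ → ℝ)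
    (hderiv : ∀ t, HasLeftDerivAtR h (h' t) t) : Measurable h' := by
  have hseq : Tendsto (fun n : ℕ => -(1 / ((n : ℝ) + 1))) atTop (nhdsWithin 0 (Set.Iio 0)) := by
    rw [tendsto_nhdsWithin_iff]
    constructor
    · simpa using (tendsto_one_div_add_atTop_nhds_zero_nat (𝕜 := ℝ)).neg
    · filter_upwards with n
      have : (0:ℝ) < 1 / ((n:ℝ)+1) := by positivity
      simpa [Set.mem_Iio] using this
  apply measurable_of_tendsto_metrizable
    (f := fun n t => (h (t + -(1 / ((n : ℝ) + 1))) - h t) / -(1 / ((n : ℝ) + 1)))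
  · intro n
    exact (((hc.comp (continuous_id.add continuous_const)).sub hc).div_const _).measurable
  · rw [tendsto_pi_nhds]
    intro t
    exact (hderiv t).comp hseq

lemma aux_bound (h : ℝ → ℝ) (K : ℝ≥0) (hLip : LipschitzWith K h) (h' : ℝ → ℝ)
    (hderiv : ∀ t, HasLeftDerivAtR h (h' t) t) (t : ℝ) : |h' t| ≤ (K : ℝ) := by
  have habs : Tendsto (fun s : ℝ => |(h (t + s) - h t) / s|) (nhdsWithin 0 (Set.Iio 0))
      (nhds |h' t|) := (hderiv t).abs
  refine le_of_tendsto habs ?_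
  filter_upwards [self_mem_nhdsWithin] with s hs
  have hs0 : s ≠ 0 := ne_of_lt hs
  rw [abs_div, div_le_iff₀ (abs_pos.2 hs0)]
  have := hLip.dist_le_mul (t + s) t
  simpa [Real.dist_eq, add_sub_cancel_left] using this

lemma aux_intInt (h' : ℝ → ℝ) (hm : Measurable h') (K : ℝ) (hb : ∀ t, |h' t| ≤ K)
    (a b : ℝ) : IntervalIntegrable h' volume a b := by
  rw [intervalIntegrable_iff]
  apply Measure.integrableOn_of_bounded (M := K)
  · exact measure_Ioc_lt_top.ne
  · exact hm.aestronglyMeasurable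
  · filter_upwards with t
    simpa [Real.norm_eq_abs] using hb t

lemma aux_ftc (h : ℝ → ℝ) (hc : Continuous h) (h' : ℝ → ℝ)
    (hderiv : ∀ t, HasLeftDerivAtR h (h' t) t)
    (hintg : ∀ a b : ℝ, IntervalIntegrable (fun x => -h' (-x)) volume a b)
    {s t : ℝ} (hst : s ≤ t) : (∫ u in s..t, h' u) = h t - h s := by
  have hcont : ContinuousOn (fun x : ℝ => h (-x)) (Set.Icc (-t) (-s)) :=
    (hc.comp continuous_neg).continuousOn
  have hder : ∀ x ∈ Set.Ioo (-t) (-s),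
      HasDerivWithinAt (fun x : ℝ => h (-x)) (-h' (-x)) (Set.Ioi x) x := by
    intro x _
    rw [hasDerivWithinAt_iff_tendsto_slope]
    have hxd : x ∉ Set.Ioi x := by simp
    rw [Set.diff_singleton_eq_self hxd]
    have hmap : Tendsto (fun y => x - y) (nhdsWithin x (Set.Ioi x))
        (nhdsWithin 0 (Set.Iio 0)) := by
      apply tendsto_nhdsWithin_of_tendsto_nhds_of_eventually_within
      · have : Tendsto (fun y : ℝ => x - y) (nhds x) (nhds (x - x)) :=
          tendsto_const_nhds.sub tendsto_id
        simpa using this.mono_left nhdsWithin_le_nhds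
      · filter_upwards [self_mem_nhdsWithin] with y hy
        simpa [Set.mem_Iio] using sub_neg.2 (Set.mem_Ioi.1 hy)
    have hcomp := (hderiv (-x)).comp hmap
    have heq : ∀ y : ℝ, (h (-x + (x - y)) - h (-x)) / (x - y)
        = -(slope (fun z => h (-z)) x y) := by
      intro y
      rw [show -x + (x - y) = -y by ring]
      rw [slope_def_field]
      rcases eq_or_ne y x with rfl | hyx
      · simp
      · have h1 : y - x ≠ 0 := sub_ne_zero.2 hyx
        have h2 : x - y ≠ 0 := sub_ne_zero.2 (Ne.symm hyx)
        field_simp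
        ring
    have hcomp' : Tendsto (fun y => -(slope (fun z => h (-z)) x y))
        (nhdsWithin x (Set.Ioi x)) (nhds (h' (-x))) := by
      refine hcomp.congr fun y => heq y
    have := hcomp'.neg
    simpa using this
  have key := intervalIntegral.integral_eq_sub_of_hasDeriv_right_of_le (a := -t) (b := -s)
    (f := fun x : ℝ => h (-x)) (f' := fun x : ℝ => -h' (-x)) (by linarith) hcont hder
    (hintg (-t) (-s))
  rw [intervalIntegral.integral_neg, intervalIntegral.integral_comp_neg] at key
  simp only [neg_neg] at key
  linarith [key]

lemma aux_convex (p : ℝ → ℝ) {a b : ℝ} (hp : MonotoneOn p (Set.Icc a b)) :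
    ConvexOn ℝ (Set.Icc a b) (fun t => ∫ u in a..t, p u) := by
  have hii : ∀ x y : ℝ, x ∈ Set.Icc a b → y ∈ Set.Icc a b → x ≤ y →
      IntervalIntegrable p volume x y := by
    intro x y hx hy hxy
    refine (hp.mono ?_).intervalIntegrable
    rw [Set.uIcc_of_le hxy]
    exact Set.Icc_subset_Icc hx.1 hy.2
  apply convexOn_of_slope_mono_adjacent (convex_Icc a b)
  intro x y z hx hz hxy hyz
  have hy : y ∈ Set.Icc a b := ⟨hx.1.trans hxy.le, hyz.le.trans hz.2⟩
  have ha : a ∈ Set.Icc a b := Set.left_mem_Icc.2 (hx.1.trans hx.2)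
  have e1 : (∫ u in a..y, p u) - ∫ u in a..x, p u = ∫ u in x..y, p u :=
    intervalIntegral.integral_interval_sub_left (hii a y ha hy hy.1) (hii a x ha hx hx.1)
  have e2 : (∫ u in a..z, p u) - ∫ u in a..y, p u = ∫ u in y..z, p u :=
    intervalIntegral.integral_interval_sub_left (hii a z ha hz hz.1) (hii a y ha hy hy.1)
  have h1 : (∫ u in x..y, p u) ≤ (y - x) * p y := by
    have := intervalIntegral.integral_mono_on hxy.le (hii x y hx hy hxy.le)
      intervalIntegrable_const
      (fun u hu => hp ⟨hx.1.trans hu.1, hu.2.trans hy.2⟩ hy hu.2)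
    simpa [intervalIntegral.integral_const, smul_eq_mul] using this
  have h2 : (z - y) * p y ≤ ∫ u in y..z, p u := by
    have := intervalIntegral.integral_mono_on hyz.le intervalIntegrable_const
      (hii y z hy hz hyz.le)
      (fun u hu => hp hy ⟨hy.1.trans hu.1, hu.2.trans hz.2⟩ hu.1)
    simpa [intervalIntegral.integral_const, smul_eq_mul] using this
  calc ((∫ u in a..y, p u) - ∫ u in a..x, p u) / (y - x) ≤ p y := by
        rw [div_le_iff₀ (by linarith)]
        rw [e1]; nlinarith
    _ ≤ ((∫ u in a..z, p u) - ∫ u in a..y, p u) / (z - y) := by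
        rw [le_div_iff₀ (by linarith)]
        rw [e2]; nlinarith

end Aux9

/-- If `h : ℝ → ℝ` is Lipschitz, left-differentiable everywhere with left
derivative `∂₋h` of finite total variation on `[-π, π]`, then `h|_{[-π,π]}` is a difference
of two convex functions and `∂₋h` is left-continuous on `(-π, π]`. -/
theorem stmt9 (h : ℝ → ℝ) (hLip : ∃ K : ℝ≥0, LipschitzWith K h)
    (h' : ℝ → ℝ) (hderiv : ∀ t : ℝ, HasLeftDerivAtR h (h' t) t)
    (hTV : eVariationOn h' (Set.Icc (-π) π) ≠ ⊤) :
    (∃ φ ψ : ℝ → ℝ, ConvexOn ℝ (Set.Icc (-π) π) φ ∧ ConvexOn ℝ (Set.Icc (-π) π) ψ ∧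
      ∀ t ∈ Set.Icc (-π) π, h t = φ t - ψ t) ∧
    ∀ t ∈ Set.Ioc (-π) π, Filter.Tendsto h' (nhdsWithin t (Set.Iio t)) (nhds (h' t)) := by
  obtain ⟨K, hLip⟩ := hLip
  have hc : Continuous h := hLip.continuous
  have hm : Measurable h' := aux_measurable h hc h' hderiv
  have hb : ∀ t, |h' t| ≤ (K : ℝ) := fun t => aux_bound h K hLip h' hderiv t
  have hint : ∀ a b : ℝ, IntervalIntegrable h' volume a b := aux_intInt h' hm K hb
  have hftc : ∀ {s t : ℝ}, s ≤ t → (∫ u in s..t, h' u) = h t - h s := by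
    intro s t hst
    refine aux_ftc h hc h' hderiv ?_ hst
    intro a b
    exact aux_intInt _ ((hm.comp measurable_neg).neg) K
      (fun u => by simpa [abs_neg] using hb (-u)) a b
  have hBV : LocallyBoundedVariationOn h' (Set.Icc (-π) π) :=
    BoundedVariationOn.locallyBoundedVariationOn hTV
  obtain ⟨p, q, hp, hq, hpq⟩ := hBV.exists_monotoneOn_sub_monotoneOn
  have hpq' : ∀ u : ℝ, h' u = p u - q u := fun u => by rw [hpq]; rfl
  have hpiI : ∀ t ∈ Set.Icc (-π) π, IntervalIntegrable p volume (-π) t := by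
    intro t ht
    refine (hp.mono ?_).intervalIntegrable
    rw [Set.uIcc_of_le ht.1]
    exact Set.Icc_subset_Icc le_rfl ht.2
  have hqiI : ∀ t ∈ Set.Icc (-π) π, IntervalIntegrable q volume (-π) t := by
    intro t ht
    refine (hq.mono ?_).intervalIntegrable
    rw [Set.uIcc_of_le ht.1]
    exact Set.Icc_subset_Icc le_rfl ht.2
  constructor
  · refine ⟨fun t => h (-π) + ∫ u in (-π)..t, p u, fun t => ∫ u in (-π)..t, q u, ?_, ?_, ?_⟩
    · exact (convexOn_const _ (convex_Icc _ _)).add (aux_convex p hp)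
    · exact aux_convex q hq
    · intro t ht
      have e0 : (∫ u in (-π)..t, h' u) = h t - h (-π) := hftc ht.1
      have e1 : (∫ u in (-π)..t, h' u) = (∫ u in (-π)..t, p u) - ∫ u in (-π)..t, q u := by
        rw [← intervalIntegral.integral_sub (hpiI t ht) (hqiI t ht)]
        exact intervalIntegral.integral_congr fun u _ => hpq' u
      rw [e1] at e0
      show h t = (h (-π) + ∫ u in (-π)..t, p u) - ∫ u in (-π)..t, q u
      linarith
  · intro t ht
    have htIcc : t ∈ Set.Icc (-π) π := ⟨ht.1.le, ht.2⟩
    -- monotone extensions to the left of t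
    set p' : ℝ → ℝ := fun y => p (max y (-π)) with hp'def
    set q' : ℝ → ℝ := fun y => q (max y (-π)) with hq'def
    have hmem : ∀ y : ℝ, y < t → max y (-π) ∈ Set.Icc (-π) π :=
      fun y hy => ⟨le_max_right _ _, max_le (hy.le.trans ht.2) (neg_le_self pi_pos.le)⟩
    have hmemle : ∀ y : ℝ, y < t → max y (-π) ≤ t :=
      fun y hy => max_le hy.le ht.1.le
    have hp'mono : MonotoneOn p' (Set.Iio t) := fun y hy z hz hyz =>
      hp (hmem y hy) (hmem z hz) (max_le_max hyz le_rfl)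
    have hq'mono : MonotoneOn q' (Set.Iio t) := fun y hy z hz hyz =>
      hq (hmem y hy) (hmem z hz) (max_le_max hyz le_rfl)
    have hp'bdd : BddAbove (p' '' Set.Iio t) := by
      refine ⟨p t, ?_⟩
      rintro _ ⟨y, hy, rfl⟩
      exact hp (hmem y hy) htIcc (hmemle y hy)
    have hq'bdd : BddAbove (q' '' Set.Iio t) := by
      refine ⟨q t, ?_⟩
      rintro _ ⟨y, hy, rfl⟩
      exact hq (hmem y hy) htIcc (hmemle y hy)
    have htp : Tendsto p' (nhdsWithin t (Set.Iio t)) (nhds (sSup (p' '' Set.Iio t))) :=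
      hp'mono.tendsto_nhdsLT hp'bdd
    have htq : Tendsto q' (nhdsWithin t (Set.Iio t)) (nhds (sSup (q' '' Set.Iio t))) :=
      hq'mono.tendsto_nhdsLT hq'bdd
    set L : ℝ := sSup (p' '' Set.Iio t) - sSup (q' '' Set.Iio t) with hLdef
    have hL : Tendsto h' (nhdsWithin t (Set.Iio t)) (nhds L) := by
      refine (htp.sub htq).congr' ?_
      filter_upwards [Ioo_mem_nhdsLT ht.1] with y hy
      have : max y (-π) = y := max_eq_left hy.1.le
      simp only [hp'def, hq'def, this]
      exact (hpq' y).symm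
    -- the slope tends to h' t (from the left derivative hypothesis)
    have hmap2 : Tendsto (fun s => s - t) (nhdsWithin t (Set.Iio t))
        (nhdsWithin 0 (Set.Iio 0)) := by
      apply tendsto_nhdsWithin_of_tendsto_nhds_of_eventually_within
      · have : Tendsto (fun s : ℝ => s - t) (nhds t) (nhds (t - t)) :=
          tendsto_id.sub tendsto_const_nhds
        simpa using this.mono_left nhdsWithin_le_nhds
      · filter_upwards [self_mem_nhdsWithin] with y hy
        simpa [Set.mem_Iio] using sub_neg.2 (Set.mem_Iio.1 hy)
    have hG1 : Tendsto (fun s => (h t - h s) / (t - s)) (nhdsWithin t (Set.Iio t))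
        (nhds (h' t)) := by
      refine ((hderiv t).comp hmap2).congr fun s => ?_
      show (h (t + (s - t)) - h t) / (s - t) = (h t - h s) / (t - s)
      rw [show t + (s - t) = s by ring, show s - t = -(t - s) by ring, div_neg]
      ring
    -- the slope also tends to L
    have hG2 : Tendsto (fun s => (h t - h s) / (t - s)) (nhdsWithin t (Set.Iio t))
        (nhds L) := by
      rw [Metric.tendsto_nhdsWithin_nhds]
      intro ε hε
      rw [Metric.tendsto_nhdsWithin_nhds] at hL
      obtain ⟨δ, hδ, hδ'⟩ := hL (ε / 2) (by positivity)
      refine ⟨δ, hδ, ?_⟩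
      intro s hs hd
      have hst : s < t := hs
      have htspos : (0:ℝ) < t - s := by linarith
      have hbound : ‖∫ u in s..t, (h' u - L)‖ ≤ (ε / 2) * |t - s| := by
        apply intervalIntegral.norm_integral_le_of_norm_le_const_ae
        have hne : ∀ᵐ u : ℝ, u ≠ t := by
          rw [MeasureTheory.ae_iff]
          have : {u : ℝ | ¬ u ≠ t} = {t} := by ext u; simp
          rw [this]
          exact Real.volume_singleton
        filter_upwards [hne] with u hu humem
        rw [Set.uIoc_of_le hst.le] at humem
        have hult : u < t := lt_of_le_of_ne humem.2 hu
        have : dist u t < δ := by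
          rw [Real.dist_eq, abs_of_nonpos (by linarith)]
          rw [Real.dist_eq, abs_of_nonpos (by linarith)] at hd
          linarith [humem.1]
        have := hδ' (Set.mem_Iio.2 hult) this
        rw [Real.dist_eq] at this
        rw [Real.norm_eq_abs]
        linarith
      have hval : (∫ u in s..t, (h' u - L)) = (h t - h s) - (t - s) * L := by
        rw [intervalIntegral.integral_sub (hint s t) intervalIntegrable_const]
        rw [hftc hst.le, intervalIntegral.integral_const, smul_eq_mul]
      rw [hval, Real.norm_eq_abs, abs_of_pos htspos] at hbound
      rw [Real.dist_eq]
      have heq : (h t - h s) / (t - s) - L = ((h t - h s) - (t - s) * L) / (t - s) := by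
        field_simp
      rw [heq, abs_div, abs_of_pos htspos, div_lt_iff₀ htspos]
      calc |h t - h s - (t - s) * L| ≤ ε / 2 * (t - s) := hbound
        _ < ε * (t - s) := by nlinarith
    have : L = h' t := tendsto_nhds_unique hG2 hG1
    exact this ▸ hL

end CirclePaper
end
end

section
/- Let C ≥ 0 and let μ be a non-negative finite Borel measure on S¹ with μ(S¹) = C, and set f(x) = ∫_{S¹} d_{S¹}(x,y) μ(dy). Then f satisfies: (A) f(x) + f(−x) = πC for all x ∈ S¹; (B) f is Lipschitz continuous, left-differentiable at every point of S¹, and ‖∂₋f‖_TV(S¹) < ∞; and moreover ‖∂₋f‖_TV(S¹) ≤ 4C. -/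
open MeasureTheory Real Filter Set Complex
open scoped ENNReal NNReal Classical

noncomputable section

namespace CirclePaper

section Aux

lemma abs_circle_mul_conj (x y : Circle) :
    ‖(x:ℂ) * (starRingEnd ℂ) (y:ℂ)‖ = 1 := by
  rw [norm_mul, Complex.norm_conj, Circle.norm_coe, Circle.norm_coe, mul_one]

lemma arg_exp_I (θ : ℝ) (h : θ ∈ Set.Ioc (-π) π) : (Complex.exp ((θ:ℂ) * I)).arg = θ := by
  rw [Complex.exp_mul_I]; exact Complex.arg_cos_add_sin_mul_I h

lemma unit_eq_exp_arg {u : ℂ} (hu : ‖u‖ = 1) : u = Complex.exp ((u.arg : ℂ) * I) := by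
  conv_lhs => rw [← Complex.norm_mul_exp_arg_mul_I u]
  rw [hu, Complex.ofReal_one, one_mul]

lemma dS1_eq_abs_arg (x y : Circle) :
    dS1 x y = |Complex.arg ((x:ℂ) * (starRingEnd ℂ) (y:ℂ))| := by
  set u := (x:ℂ) * (starRingEnd ℂ) (y:ℂ) with hu
  have habs : ‖u‖ = 1 := abs_circle_mul_conj x y
  have hne : u ≠ 0 := by intro h; rw [h] at habs; simp at habs
  have hre : u.re = Real.cos u.arg := by
    rw [Complex.cos_arg hne, habs, div_one]
  rw [dS1, ← hu, hre]
  rcases le_or_gt 0 u.arg with h0 | h0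
  · rw [Real.arccos_cos h0 (Complex.arg_le_pi u), _root_.abs_of_nonneg h0]
  · rw [← Real.cos_neg, Real.arccos_cos (by linarith) (by linarith [Complex.neg_pi_lt_arg u]),
      _root_.abs_of_neg h0]

lemma abs_arg_mul {u v : ℂ} (hu : ‖u‖ = 1) (hv : ‖v‖ = 1) :
    |Complex.arg (u * v)| ≤ |Complex.arg u| + |Complex.arg v| := by
  have hun : u ≠ 0 := by intro h; rw [h] at hu; simp at hu
  have hvn : v ≠ 0 := by intro h; rw [h] at hv; simp at hv
  rcases le_or_gt π (|Complex.arg u| + |Complex.arg v|) with h | h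
  · calc |Complex.arg (u*v)| ≤ π :=
          abs_le.mpr ⟨(Complex.neg_pi_lt_arg (u*v)).le, Complex.arg_le_pi (u*v)⟩
      _ ≤ _ := h
  · have h1 : Complex.arg u + Complex.arg v ∈ Set.Ioc (-π) π := by
      constructor
      · have h2 : |Complex.arg u + Complex.arg v| ≤ |Complex.arg u| + |Complex.arg v| := abs_add_le _ _
        linarith [neg_abs_le (Complex.arg u + Complex.arg v)]
      · have h2 : |Complex.arg u + Complex.arg v| ≤ |Complex.arg u| + |Complex.arg v| := abs_add_le _ _
        linarith [le_abs_self (Complex.arg u + Complex.arg v)]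
    rw [Complex.arg_mul hun hvn h1]
    exact abs_add_le _ _

lemma circ_conj_mul (y : Circle) : (y:ℂ) * (starRingEnd ℂ) (y:ℂ) = 1 := by
  rw [Complex.mul_conj]
  norm_cast
  rw [Complex.normSq_eq_norm_sq, Circle.norm_coe, one_pow]

lemma dS1_symm (x y : Circle) : dS1 x y = dS1 y x := by
  unfold dS1
  congr 1
  have h : (y:ℂ) * (starRingEnd ℂ) (x:ℂ) = (starRingEnd ℂ) ((x:ℂ) * (starRingEnd ℂ) (y:ℂ)) := by
    rw [map_mul, Complex.conj_conj, mul_comm]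
  rw [h, Complex.conj_re]

lemma dS1_tri (x y z : Circle) : dS1 x z ≤ dS1 x y + dS1 y z := by
  rw [dS1_eq_abs_arg, dS1_eq_abs_arg, dS1_eq_abs_arg]
  have hkey : (x:ℂ) * (starRingEnd ℂ) (z:ℂ)
      = ((x:ℂ) * (starRingEnd ℂ) (y:ℂ)) * ((y:ℂ) * (starRingEnd ℂ) (z:ℂ)) := by
    have h := circ_conj_mul y
    calc (x:ℂ) * (starRingEnd ℂ) (z:ℂ)
        = (x:ℂ) * ((y:ℂ) * (starRingEnd ℂ) (y:ℂ)) * (starRingEnd ℂ) (z:ℂ) := by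
          rw [h, mul_one]
      _ = _ := by ring
  rw [hkey]
  exact abs_arg_mul (abs_circle_mul_conj x y) (abs_circle_mul_conj y z)

lemma dS1_diff_le (x y z : Circle) : |dS1 x z - dS1 y z| ≤ dS1 x y := by
  rw [abs_sub_le_iff]
  constructor
  · linarith [dS1_tri x y z]
  · have h := dS1_tri y x z
    rw [dS1_symm y x] at h
    linarith

lemma exp_shift (s θ : ℝ) :
    Complex.exp ((s:ℂ) * I) * Complex.exp ((θ:ℂ) * I) = Complex.exp (((s+θ : ℝ):ℂ) * I) := by
  rw [← Complex.exp_add]; push_cast; ring_nf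

lemma mul_exp_coe (t : ℝ) (x y : Circle) :
    ((Circle.exp t * x : Circle) : ℂ) * (starRingEnd ℂ) (y:ℂ)
      = Complex.exp ((t:ℂ) * I) * ((x:ℂ) * (starRingEnd ℂ) (y:ℂ)) := by
  push_cast [Circle.coe_exp]
  ring

lemma dS1_rot (t : ℝ) (x y : Circle) :
    dS1 (Circle.exp t * x) y
      = |Complex.arg (Complex.exp
          (((t + Complex.arg ((x:ℂ) * (starRingEnd ℂ) (y:ℂ)) : ℝ):ℂ) * I))| := by
  rw [dS1_eq_abs_arg]
  congr 2
  rw [mul_exp_coe]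
  conv_lhs => rw [unit_eq_exp_arg (abs_circle_mul_conj x y)]
  exact exp_shift t _

lemma dS1_exp_self (t : ℝ) (ht : t ∈ Set.Ioc (-π) π) (x : Circle) :
    dS1 (Circle.exp t * x) x = |t| := by
  rw [dS1_eq_abs_arg, mul_exp_coe, circ_conj_mul, mul_one, arg_exp_I t ht]

lemma exp_two_pi_int (k : ℤ) (θ : ℝ) :
    Complex.exp (((θ + 2*π*(k:ℝ) : ℝ) : ℂ) * I) = Complex.exp ((θ:ℂ) * I) := by
  rw [show (((θ + 2*π*(k:ℝ) : ℝ) : ℂ) * I) = (θ:ℂ)*I + (k:ℂ)*(2*(π:ℂ)*I) by push_cast; ring,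
    Complex.exp_add, Complex.exp_int_mul_two_pi_mul_I, mul_one]

lemma arg_exp_le_zero_iff (θ : ℝ) :
    (Complex.exp ((θ:ℂ) * I)).arg ≤ 0 ↔ Int.fract (-θ/(2*π)) < 1/2 := by
  have hπ : (0:ℝ) < π := Real.pi_pos
  set c : ℝ := -θ/(2*π) with hc
  set g : ℝ := Int.fract c with hg
  set k : ℤ := ⌊c⌋ with hk
  have hfr : g = c - k := by
    have h := Int.self_sub_fract c; rw [← hg, ← hk] at h; linarith
  have hg0 : 0 ≤ g := Int.fract_nonneg c
  have hg1 : g < 1 := Int.fract_lt_one c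
  have hθ : θ = -(2*π*g) + 2*π*(-(k:ℝ)) := by
    have h : c * (2*π) = -θ := by rw [hc]; field_simp
    nlinarith [hfr]
  rcases lt_or_ge g (1/2) with h | h
  · have harg : (Complex.exp ((θ:ℂ) * I)).arg = -(2*π*g) := by
      rw [show θ = (-(2*π*g)) + 2*π*((-k:ℤ):ℝ) by push_cast; linarith [hθ]]
      rw [exp_two_pi_int (-k) (-(2*π*g))]
      exact arg_exp_I _ ⟨by nlinarith, by nlinarith⟩
    simp only [harg]
    constructor
    · intro _; exact h
    · intro _; nlinarith
  · have harg : (Complex.exp ((θ:ℂ) * I)).arg = 2*π - 2*π*g := by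
      rw [show θ = (2*π - 2*π*g) + 2*π*((-k-1:ℤ):ℝ) by push_cast; linarith [hθ]]
      rw [exp_two_pi_int (-k-1) (2*π - 2*π*g)]
      exact arg_exp_I _ ⟨by nlinarith, by nlinarith⟩
    simp only [harg]
    constructor
    · intro h'; nlinarith
    · intro h'; linarith

lemma char (t : ℝ) (y : Circle) :
    Complex.arg ((Circle.exp t : ℂ) * (starRingEnd ℂ) (y:ℂ)) ≤ 0
      ↔ Int.fract ((Complex.arg (y:ℂ) - t)/(2*π)) < 1/2 := by
  have hconj : (starRingEnd ℂ) (y:ℂ)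
      = Complex.exp (((-(Complex.arg (y:ℂ)) : ℝ):ℂ) * I) := by
    conv_lhs => rw [unit_eq_exp_arg (Circle.norm_coe y)]
    rw [← Complex.exp_conj, map_mul, Complex.conj_ofReal, Complex.conj_I]
    push_cast; ring_nf
  rw [Circle.coe_exp, hconj, exp_shift, arg_exp_le_zero_iff]
  rw [show -(t + -(Complex.arg (y:ℂ)))/(2*π) = (Complex.arg (y:ℂ) - t)/(2*π) by ring_nf]

lemma floor_succ_le {x y : ℝ} (hxy : x ≤ y) (hf : Int.fract y < Int.fract x) :
    ⌊x⌋ + 1 ≤ ⌊y⌋ := by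
  rcases eq_or_lt_of_le (Int.floor_mono hxy) with h | h
  · exfalso
    have h1 := Int.self_sub_fract x
    have h2 := Int.self_sub_fract y
    rw [← h] at h2
    linarith
  · omega

lemma two_trans_E {a b c d : ℝ} (hab : b ≤ a) (hbc : c ≤ b) (hcd : d ≤ c) (hspan : a - d ≤ 1)
    (ha : 1/2 ≤ Int.fract a) (hb : Int.fract b < 1/2)
    (hc : 1/2 ≤ Int.fract c) (hd : Int.fract d < 1/2) : False := by
  have h1 : ⌊c⌋ + 1 ≤ ⌊b⌋ := floor_succ_le hbc (by linarith)
  have h2 : ⌊d⌋ ≤ ⌊c⌋ := Int.floor_mono hcd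
  have h3 : ⌊b⌋ ≤ ⌊a⌋ := Int.floor_mono hab
  have h4 : (⌊d⌋:ℝ) + 1 ≤ (⌊a⌋:ℝ) := by exact_mod_cast by omega
  have e1 := Int.self_sub_fract a
  have e2 := Int.self_sub_fract d
  linarith

lemma two_trans_F {a b c d : ℝ} (hab : b ≤ a) (hbc : c ≤ b) (hcd : d ≤ c) (hspan : a - d ≤ 1)
    (ha : Int.fract a < 1/2) (hb : 1/2 ≤ Int.fract b)
    (hc : Int.fract c < 1/2) (hd : 1/2 ≤ Int.fract d) : False := by
  have h1 : ⌊b⌋ + 1 ≤ ⌊a⌋ := floor_succ_le hab (by linarith)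
  have h2 : ⌊d⌋ + 1 ≤ ⌊c⌋ := floor_succ_le hcd (by linarith)
  have h3 : ⌊c⌋ ≤ ⌊b⌋ := Int.floor_mono hbc
  have h4 : (⌊d⌋:ℝ) + 2 ≤ (⌊a⌋:ℝ) := by exact_mod_cast by omega
  have e1 := Int.self_sub_fract a
  have e2 := Int.self_sub_fract d
  have h5 := Int.fract_lt_one d
  have h6 := Int.fract_nonneg a
  have hfa : (⌊a⌋:ℝ) ≤ a := Int.floor_le a
  linarith

end Aux

/-- If `μ ≥ 0` has total mass `C` and `f(x) = ∫ d(x,y) μ(dy)`, then `f`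
satisfies (A), (B), and `‖∂₋f‖_{TV(S¹)} ≤ 4C`. -/
theorem stmt15 (C : ℝ) (hC : 0 ≤ C) (μ : Measure Circle) [IsFiniteMeasure μ]
    (hmass : μ Set.univ = ENNReal.ofReal C)
    (f : Circle → ℝ) (hf : ∀ x : Circle, f x = ∫ y, dS1 x y ∂μ) :
    (∀ x : Circle, f x + f (antipode x) = π * C) ∧
    LipschitzCircle f ∧
    ∃ f' : Circle → ℝ, (∀ x : Circle, HasLeftDerivCircleAt f (f' x) x) ∧
      circleTV f' ≠ ⊤ ∧ circleTV f' ≤ ENNReal.ofReal (4 * C) := by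
  classical
  set C' := (μ Set.univ).toReal with hC'
  have hC'C : C' = C := by rw [hC', hmass, ENNReal.toReal_ofReal hC]
  have hcont : ∀ x : Circle, Continuous (fun y : Circle => dS1 x y) := by
    intro x
    unfold dS1
    refine Real.continuous_arccos.comp (Complex.continuous_re.comp ?_)
    exact continuous_const.mul (Continuous.comp continuous_star continuous_subtype_val)
  have hbound : ∀ x y : Circle, |dS1 x y| ≤ π := by
    intro x y
    unfold dS1
    rw [_root_.abs_of_nonneg (Real.arccos_nonneg _)]
    exact Real.arccos_le_pi _
  have hint : ∀ x : Circle, Integrable (fun y => dS1 x y) μ := by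
    intro x
    refine Integrable.mono' (integrable_const π) (hcont x).aestronglyMeasurable ?_
    exact Filter.Eventually.of_forall fun y => by
      rw [Real.norm_eq_abs]; exact hbound x y
  refine ⟨?_, ?_, ?_⟩
  · -- Part A
    intro x
    have key : ∀ y : Circle, dS1 x y + dS1 (antipode x) y = π := by
      intro y
      have hcoe : ((antipode x : Circle) : ℂ) = -(x:ℂ) := by
        rw [antipode, Circle.coe_mul, Circle.coe_exp]
        rw [Complex.exp_pi_mul_I]; ring
      unfold dS1
      rw [hcoe]
      have hre : ((-(x:ℂ)) * (starRingEnd ℂ) (y:ℂ)).re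
          = -(((x:ℂ) * (starRingEnd ℂ) (y:ℂ)).re) := by
        rw [neg_mul, Complex.neg_re]
      rw [hre, Real.arccos_neg]; ring
    calc f x + f (antipode x)
        = ∫ y, (dS1 x y + dS1 (antipode x) y) ∂μ := by
          rw [hf, hf, integral_add (hint x) (hint _)]
      _ = ∫ _y, (π:ℝ) ∂μ := by simp only [key]
      _ = π * C := by
          rw [integral_const, measureReal_def, hmass, ENNReal.toReal_ofReal hC, smul_eq_mul, mul_comm]
  · -- Lipschitz
    refine ⟨C, ?_⟩
    intro x y
    rw [hf, hf, ← integral_sub (hint x) (hint y)]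
    calc |∫ z, (dS1 x z - dS1 y z) ∂μ|
        ≤ ∫ z, |dS1 x z - dS1 y z| ∂μ := by
          simpa [Real.norm_eq_abs] using
            norm_integral_le_integral_norm (μ := μ) (fun z => dS1 x z - dS1 y z)
      _ ≤ ∫ _z, dS1 x y ∂μ := by
          refine integral_mono ((hint x).sub (hint y)).abs (integrable_const _) ?_
          intro z
          exact dS1_diff_le x y z
      _ = C * dS1 x y := by
          rw [integral_const, measureReal_def, hmass, ENNReal.toReal_ofReal hC, smul_eq_mul]
  · -- derivative + TV
    set A : Circle → Set Circle :=
      fun x => {y : Circle | Complex.arg ((x:ℂ) * (starRingEnd ℂ) (y:ℂ)) ≤ 0} with hA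
    have hAmeas : ∀ x, MeasurableSet (A x) := by
      intro x
      have hc : Continuous (fun y : Circle => (x:ℂ) * (starRingEnd ℂ) (y:ℂ)) :=
        continuous_const.mul (Continuous.comp continuous_star continuous_subtype_val)
      exact (Complex.measurable_arg.comp hc.measurable) measurableSet_Iic
    set f' : Circle → ℝ := fun x => C' - 2*(μ (A x)).toReal with hf'def
    have hchar : ∀ (t:ℝ) (y : Circle),
        y ∈ A (Circle.exp t) ↔ Int.fract ((Complex.arg (y:ℂ) - t)/(2*π)) < 1/2 := by
      intro t y; exact char t y
    have hderiv : ∀ x : Circle, HasLeftDerivCircleAt f (f' x) x := by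
      intro x
      have hφeq : (∫ y : Circle,
          (if Complex.arg ((x:ℂ) * (starRingEnd ℂ) (y:ℂ)) ≤ 0 then (-1:ℝ) else 1) ∂μ)
            = f' x := by
        have hfun : (fun y : Circle =>
            (if Complex.arg ((x:ℂ) * (starRingEnd ℂ) (y:ℂ)) ≤ 0 then (-1:ℝ) else 1))
            = fun y => 1 - (A x).indicator (fun _ => (2:ℝ)) y := by
          funext y
          by_cases h : Complex.arg ((x:ℂ) * (starRingEnd ℂ) (y:ℂ)) ≤ 0
          · rw [if_pos h, Set.indicator_of_mem (by exact h)]; norm_num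
          · rw [if_neg h, Set.indicator_of_notMem (by exact h)]; norm_num
        rw [hfun, integral_sub (integrable_const 1)
            ((integrable_const (2:ℝ)).indicator (hAmeas x)),
          integral_const, integral_indicator_const _ (hAmeas x), hf'def]
        rw [measureReal_def, measureReal_def, ← hC']
        simp only [smul_eq_mul]
        ring
      have hmain : Filter.Tendsto
          (fun t : ℝ => ∫ y, (dS1 (Circle.exp t * x) y - dS1 x y)/t ∂μ)
          (nhdsWithin 0 (Set.Iio 0))
          (nhds (∫ y : Circle,
            (if Complex.arg ((x:ℂ) * (starRingEnd ℂ) (y:ℂ)) ≤ 0 then (-1:ℝ) else 1) ∂μ)) := by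
        apply MeasureTheory.tendsto_integral_filter_of_dominated_convergence
          (bound := fun _ => (1:ℝ))
        · exact Filter.Eventually.of_forall fun t =>
            (((hcont _).sub (hcont x)).div_const t).aestronglyMeasurable
        · have hmem : Set.Ioo (-π) 0 ∈ nhdsWithin (0:ℝ) (Set.Iio 0) :=
            Ioo_mem_nhdsLT_of_mem ⟨by linarith [Real.pi_pos], le_refl (0:ℝ)⟩
          filter_upwards [hmem] with t ht
          refine Filter.Eventually.of_forall fun y => ?_
          have htne : t ≠ 0 := ne_of_lt ht.2
          have h1 : |dS1 (Circle.exp t * x) y - dS1 x y| ≤ dS1 (Circle.exp t * x) x :=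
            dS1_diff_le _ _ _
          have h2 : dS1 (Circle.exp t * x) x = |t| :=
            dS1_exp_self t ⟨ht.1, by linarith [ht.2, Real.pi_pos]⟩ x
          rw [Real.norm_eq_abs, abs_div, div_le_one (abs_pos.mpr htne)]
          rw [h2] at h1
          exact h1
        · exact integrable_const 1
        · refine Filter.Eventually.of_forall fun y => ?_
          set θ := Complex.arg ((x:ℂ) * (starRingEnd ℂ) (y:ℂ)) with hθ
          have hθlb : -π < θ := Complex.neg_pi_lt_arg _
          have hθub : θ ≤ π := Complex.arg_le_pi _
          have hd0 : dS1 x y = |θ| := by rw [dS1_eq_abs_arg, ← hθ]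
          by_cases h : θ ≤ 0
          · have hδpos : (0:ℝ) < π + θ := by linarith
            have hmem : Set.Ioo (-(π + θ)) 0 ∈ nhdsWithin (0:ℝ) (Set.Iio 0) :=
              Ioo_mem_nhdsLT_of_mem ⟨by linarith, le_refl (0:ℝ)⟩
            refine Filter.Tendsto.congr' ?_ tendsto_const_nhds
            filter_upwards [hmem] with t ht
            have htne : t ≠ 0 := ne_of_lt ht.2
            have hrot : dS1 (Circle.exp t * x) y = |t + θ| := by
              rw [dS1_rot, ← hθ, arg_exp_I (t + θ) ⟨by linarith [ht.1], by linarith [ht.2, Real.pi_pos]⟩]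
            have hneg : t + θ < 0 := by linarith [ht.2]
            rw [if_pos h]
            rw [hrot, hd0, _root_.abs_of_neg hneg, abs_of_nonpos h]
            rw [show -(t+θ) - -θ = -t by ring, neg_div, div_self htne]
          · have hθpos : 0 < θ := not_le.mp h
            have hmem : Set.Ioo (-θ) 0 ∈ nhdsWithin (0:ℝ) (Set.Iio 0) :=
              Ioo_mem_nhdsLT_of_mem ⟨by linarith, le_refl (0:ℝ)⟩
            refine Filter.Tendsto.congr' ?_ tendsto_const_nhds
            filter_upwards [hmem] with t ht
            have htne : t ≠ 0 := ne_of_lt ht.2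
            have hrot : dS1 (Circle.exp t * x) y = |t + θ| := by
              rw [dS1_rot, ← hθ, arg_exp_I (t + θ) ⟨by linarith [ht.1, Real.pi_pos], by linarith [ht.2]⟩]
            have hpos : 0 < t + θ := by linarith [ht.1]
            rw [if_neg h]
            rw [hrot, hd0, _root_.abs_of_pos hpos, _root_.abs_of_pos hθpos]
            rw [show t + θ - θ = t by ring, div_self htne]
      have heq : ∀ t:ℝ, (f (Circle.exp t * x) - f x)/t
          = ∫ y, (dS1 (Circle.exp t * x) y - dS1 x y)/t ∂μ := by
        intro t
        rw [hf, hf, ← integral_sub (hint _) (hint x), ← integral_div]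
      rw [hφeq] at hmain
      exact hmain.congr fun t => (heq t).symm
    have hTV : circleTV f' ≤ ENNReal.ofReal (4*C) := by
      rw [circleTV]
      apply iSup_le
      rintro ⟨n, u, hu, humem⟩
      dsimp only
      set E : ℕ → Set Circle :=
        fun i => A (Circle.exp (u (i+1))) \ A (Circle.exp (u i)) with hE
      set Fs : ℕ → Set Circle :=
        fun i => A (Circle.exp (u i)) \ A (Circle.exp (u (i+1))) with hFs
      have hmE : ∀ i, MeasurableSet (E i) := fun i => (hAmeas _).diff (hAmeas _)
      have hmF : ∀ i, MeasurableSet (Fs i) := fun i => (hAmeas _).diff (hAmeas _)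
      have hkey : ∀ z w : Circle,
          (μ (A z)).toReal - (μ (A w)).toReal ≤ (μ (A z \ A w)).toReal := by
        intro z w
        have h1 : μ (A z) ≤ μ (A w) + μ (A z \ A w) := by
          calc μ (A z) ≤ μ (A w ∪ A z \ A w) := by
                refine measure_mono ?_
                intro y hy
                by_cases h : y ∈ A w
                · exact Or.inl h
                · exact Or.inr ⟨hy, h⟩
            _ ≤ μ (A w) + μ (A z \ A w) := measure_union_le _ _
        have h2 := ENNReal.toReal_mono
          (ENNReal.add_ne_top.mpr ⟨measure_ne_top μ _, measure_ne_top μ _⟩) h1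
        rw [ENNReal.toReal_add (measure_ne_top μ _) (measure_ne_top μ _)] at h2
        linarith
      have hstep : ∀ i, edist ((f' ∘ Circle.exp) (u (i+1))) ((f' ∘ Circle.exp) (u i))
          ≤ 2 * μ (E i) + 2 * μ (Fs i) := by
        intro i
        have hdist : dist ((f' ∘ Circle.exp) (u (i+1))) ((f' ∘ Circle.exp) (u i))
            ≤ 2*(μ (E i)).toReal + 2*(μ (Fs i)).toReal := by
          rw [Real.dist_eq]
          have hdiff : (f' ∘ Circle.exp) (u (i+1)) - (f' ∘ Circle.exp) (u i)
              = 2*((μ (A (Circle.exp (u i)))).toReal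
                  - (μ (A (Circle.exp (u (i+1))))).toReal) := by
            simp only [Function.comp_apply, hf'def]
            ring
          have h1 := hkey (Circle.exp (u i)) (Circle.exp (u (i+1)))
          have h2 := hkey (Circle.exp (u (i+1))) (Circle.exp (u i))
          have h3 : (0:ℝ) ≤ (μ (E i)).toReal := ENNReal.toReal_nonneg
          have h4 : (0:ℝ) ≤ (μ (Fs i)).toReal := ENNReal.toReal_nonneg
          rw [hdiff, abs_mul]
          have h1' : (μ (A (Circle.exp (u (i+1))))).toReal
              - (μ (A (Circle.exp (u i)))).toReal ≤ (μ (E i)).toReal := hkey _ _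
          have h2' : (μ (A (Circle.exp (u i)))).toReal
              - (μ (A (Circle.exp (u (i+1))))).toReal ≤ (μ (Fs i)).toReal := hkey _ _
          have h5 : |(μ (A (Circle.exp (u i)))).toReal
              - (μ (A (Circle.exp (u (i+1))))).toReal|
              ≤ (μ (E i)).toReal + (μ (Fs i)).toReal := by
            rw [abs_sub_le_iff]
            exact ⟨by linarith, by linarith⟩
          rw [_root_.abs_two]
          linarith
        calc edist ((f' ∘ Circle.exp) (u (i+1))) ((f' ∘ Circle.exp) (u i))
            = ENNReal.ofReal (dist ((f' ∘ Circle.exp) (u (i+1))) ((f' ∘ Circle.exp) (u i))) :=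
              edist_dist _ _
          _ ≤ ENNReal.ofReal (2*(μ (E i)).toReal + 2*(μ (Fs i)).toReal) :=
              ENNReal.ofReal_le_ofReal hdist
          _ = 2 * μ (E i) + 2 * μ (Fs i) := by
              rw [ENNReal.ofReal_add (by positivity) (by positivity),
                ENNReal.ofReal_mul (by norm_num), ENNReal.ofReal_mul (by norm_num),
                ENNReal.ofReal_toReal (measure_ne_top μ _),
                ENNReal.ofReal_toReal (measure_ne_top μ _)]
              norm_num
      have hanti : ∀ (y : Circle) {p q : ℕ}, p ≤ q →
          (Complex.arg (y:ℂ) - u q)/(2*π) ≤ (Complex.arg (y:ℂ) - u p)/(2*π) := by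
        intro y p q hpq
        have h1 : u p ≤ u q := hu hpq
        rw [div_eq_mul_inv, div_eq_mul_inv]
        apply mul_le_mul_of_nonneg_right (by linarith) (by positivity)
      have hspan : ∀ (y : Circle) (p q : ℕ),
          (Complex.arg (y:ℂ) - u p)/(2*π) - (Complex.arg (y:ℂ) - u q)/(2*π) ≤ 1 := by
        intro y p q
        have h2π : (0:ℝ) < 2*π := by positivity
        have hp := (humem p).1
        have hq := (humem q).2
        rw [div_sub_div_same, div_le_one h2π]
        linarith
      have hdisjE : (↑(Finset.range n) : Set ℕ).PairwiseDisjoint E := by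
        have haux : ∀ i j : ℕ, i < j → Disjoint (E i) (E j) := by
          intro i j hij
          rw [Set.disjoint_left]
          intro y hyi hyj
          simp only [hE, Set.mem_diff] at hyi hyj
          obtain ⟨hy1, hy2⟩ := hyi
          obtain ⟨hy3, hy4⟩ := hyj
          rw [hchar] at hy1 hy3
          have hy2' : (1:ℝ)/2 ≤ Int.fract ((Complex.arg (y:ℂ) - u i)/(2*π)) :=
            not_lt.mp fun hlt => hy2 ((hchar _ y).mpr hlt)
          have hy4' : (1:ℝ)/2 ≤ Int.fract ((Complex.arg (y:ℂ) - u j)/(2*π)) :=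
            not_lt.mp fun hlt => hy4 ((hchar _ y).mpr hlt)
          exact two_trans_E (hanti y (Nat.le_succ i)) (hanti y hij) (hanti y (Nat.le_succ j))
            (hspan y i (j+1)) hy2' hy1 hy4' hy3
        intro i _ j _ hij
        rcases lt_or_gt_of_ne hij with h | h
        · exact haux i j h
        · exact (haux j i h).symm
      have hdisjF : (↑(Finset.range n) : Set ℕ).PairwiseDisjoint Fs := by
        have haux : ∀ i j : ℕ, i < j → Disjoint (Fs i) (Fs j) := by
          intro i j hij
          rw [Set.disjoint_left]
          intro y hyi hyj
          simp only [hFs, Set.mem_diff] at hyi hyj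
          obtain ⟨hy1, hy2⟩ := hyi
          obtain ⟨hy3, hy4⟩ := hyj
          rw [hchar] at hy1 hy3
          have hy2' : (1:ℝ)/2 ≤ Int.fract ((Complex.arg (y:ℂ) - u (i+1))/(2*π)) :=
            not_lt.mp fun hlt => hy2 ((hchar _ y).mpr hlt)
          have hy4' : (1:ℝ)/2 ≤ Int.fract ((Complex.arg (y:ℂ) - u (j+1))/(2*π)) :=
            not_lt.mp fun hlt => hy4 ((hchar _ y).mpr hlt)
          exact two_trans_F (hanti y (Nat.le_succ i)) (hanti y hij) (hanti y (Nat.le_succ j))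
            (hspan y i (j+1)) hy1 hy2' hy3 hy4'
        intro i _ j _ hij
        rcases lt_or_gt_of_ne hij with h | h
        · exact haux i j h
        · exact (haux j i h).symm
      have hsumE : ∑ i ∈ Finset.range n, μ (E i) ≤ ENNReal.ofReal C := by
        rw [← MeasureTheory.measure_biUnion_finset hdisjE (fun i _ => hmE i), ← hmass]
        exact measure_mono (Set.subset_univ _)
      have hsumF : ∑ i ∈ Finset.range n, μ (Fs i) ≤ ENNReal.ofReal C := by
        rw [← MeasureTheory.measure_biUnion_finset hdisjF (fun i _ => hmF i), ← hmass]
        exact measure_mono (Set.subset_univ _)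
      refine le_trans (Finset.sum_le_sum fun i (_ : i ∈ Finset.range n) => hstep i) ?_
      calc ∑ i ∈ Finset.range n, (2 * μ (E i) + 2 * μ (Fs i))
          = 2 * (∑ i ∈ Finset.range n, μ (E i)) + 2 * (∑ i ∈ Finset.range n, μ (Fs i)) := by
            rw [Finset.sum_add_distrib, Finset.mul_sum, Finset.mul_sum]
        _ ≤ 2 * ENNReal.ofReal C + 2 * ENNReal.ofReal C := by gcongr
        _ = ENNReal.ofReal (4*C) := by
            rw [show ((2:ℝ≥0∞)) = ENNReal.ofReal (2:ℝ) by norm_num,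
              ← ENNReal.ofReal_mul (by norm_num),
              ← ENNReal.ofReal_add (by linarith) (by linarith),
              show (2*C + 2*C : ℝ) = 4*C by ring]
    refine ⟨f', hderiv, ?_, hTV⟩
    exact ne_top_of_le_ne_top ENNReal.ofReal_ne_top hTV


end CirclePaper
end
end

section
/- Let x_j = q(2πj/3) for j = 0, 1, 2, and define f : S¹ → ℝ by f(x) = π/3 + min_{j=0,1,2} d_{S¹}(x, x_j). Then f satisfies f(x) + f(−x) = π for all x ∈ S¹, f is Lipschitz continuous and left-differentiable with ‖∂₋f‖_TV(S¹) = 12; consequently, f is representable by a signed Borel measure on S¹ but is not representable by any non-negative finite Borel measure on S¹. -/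
open MeasureTheory Real Filter Set Complex
open scoped ENNReal NNReal Classical

noncomputable section

namespace CirclePaper

-- ===== auxiliary development =====

lemma two_pi_pos : (0:ℝ) < 2*π := by positivity

def E (θ : ℝ) : ℝ := Real.arccos (Real.cos θ)

lemma dS1_exp (a b : ℝ) : dS1 (Circle.exp a) (Circle.exp b) = E (a - b) := by
  unfold dS1 E
  congr 1
  rw [Circle.coe_exp, Circle.coe_exp, ← Complex.exp_conj, ← Complex.exp_add]
  rw [show (starRingEnd ℂ) ((b:ℂ) * Complex.I) = ((-b : ℝ):ℂ) * Complex.I by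
    rw [map_mul, Complex.conj_I, Complex.conj_ofReal]; push_cast; ring]
  rw [show (a:ℂ) * Complex.I + ((-b:ℝ):ℂ) * Complex.I = ((a - b : ℝ):ℂ) * Complex.I by
    push_cast; ring]
  exact Complex.exp_ofReal_mul_I_re _

lemma E_nonneg (θ : ℝ) : 0 ≤ E θ := Real.arccos_nonneg _
lemma E_le_pi (θ : ℝ) : E θ ≤ π := Real.arccos_le_pi _
lemma E_neg (θ : ℝ) : E (-θ) = E θ := by simp [E]
lemma E_eq_abs {θ : ℝ} (h1 : -π ≤ θ) (h2 : θ ≤ π) : E θ = |θ| := by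
  rcases le_total 0 θ with h | h
  · rw [_root_.abs_of_nonneg h]; exact Real.arccos_cos h h2
  · rw [_root_.abs_of_nonpos h, ← E_neg]; exact Real.arccos_cos (by linarith) (by linarith)
lemma E_period (θ : ℝ) (k : ℤ) : E (θ + k * (2*π)) = E θ := by
  simp [E, Real.cos_add_int_mul_two_pi]
lemma E_sub_two_pi (θ : ℝ) : E (θ - 2*π) = E θ := by
  have h := E_period (θ - 2*π) 1
  rw [show θ - 2*π + (1:ℤ) * (2*π) = θ by push_cast; ring] at h
  exact h.symm
lemma E_antipode (θ : ℝ) : E θ + E (θ + π) = π := by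
  unfold E
  rw [Real.cos_add_pi, Real.arccos_neg]
  ring

def red (θ : ℝ) : ℝ := toIocMod two_pi_pos (-π) θ

lemma red_mem (θ : ℝ) : red θ ∈ Set.Ioc (-π) π := by
  have h := toIocMod_mem_Ioc two_pi_pos (-π) θ
  rwa [show -π + 2*π = π by ring] at h

lemma red_spec (θ : ℝ) : ∃ k : ℤ, θ = red θ + k * (2*π) := by
  refine ⟨toIocDiv two_pi_pos (-π) θ, ?_⟩
  have h := self_sub_toIocMod two_pi_pos (-π) θ
  rw [zsmul_eq_mul] at h
  unfold red
  linarith [h]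

lemma E_eq_abs_red (θ : ℝ) : E θ = |red θ| := by
  obtain ⟨k, hk⟩ := red_spec θ
  have h1 := (red_mem θ).1
  have h2 := (red_mem θ).2
  calc E θ = E (red θ + k * (2*π)) := by rw [← hk]
    _ = E (red θ) := E_period _ k
    _ = |red θ| := E_eq_abs (le_of_lt h1) h2

lemma abs_red_le (θ : ℝ) : |red θ| ≤ |θ| := by
  obtain ⟨k, hk⟩ := red_spec θ
  have h1 := (red_mem θ).1
  have h2 := (red_mem θ).2
  have hr : |red θ| ≤ π := abs_le.mpr ⟨by linarith, h2⟩
  rcases eq_or_ne k 0 with h | h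
  · subst h; simp only [Int.cast_zero, zero_mul, add_zero] at hk; rw [← hk]
  · have hk1 : (1:ℝ) ≤ |(k:ℝ)| := by
      rw [← Int.cast_abs]; exact_mod_cast Int.one_le_abs h
    have h2pi : 2*π ≤ |(k:ℝ) * (2*π)| := by
      rw [abs_mul, _root_.abs_of_pos two_pi_pos]
      nlinarith [two_pi_pos]
    have he : (k:ℝ)*(2*π) = θ - red θ := by linarith
    have htri : |θ - red θ| ≤ |θ| + |red θ| := by
      calc |θ - red θ| = |θ + -(red θ)| := by ring_nf
        _ ≤ |θ| + |-(red θ)| := abs_add_le _ _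
        _ = |θ| + |red θ| := by rw [abs_neg]
    rw [he] at h2pi
    linarith [Real.pi_pos]

lemma E_le_add (s t : ℝ) : E s ≤ E t + |s - t| := by
  obtain ⟨m, hm⟩ := red_spec t
  have key : E s = E (red t + (s - t)) := by
    have h := E_period (red t + (s - t)) m
    rw [show red t + (s - t) + (m:ℝ) * (2*π) = s from by linarith] at h
    exact h
  rw [key, E_eq_abs_red]
  calc |red (red t + (s - t))| ≤ |red t + (s - t)| := abs_red_le _
    _ ≤ |red t| + |s - t| := abs_add_le _ _
    _ = E t + |s - t| := by rw [← E_eq_abs_red]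

lemma E_lip (s t : ℝ) : |E s - E t| ≤ |s - t| := by
  rw [abs_le]
  constructor
  · have := E_le_add t s
    rw [abs_sub_comm] at this
    linarith
  · linarith [E_le_add s t]


def Gfun (u : ℝ) : ℝ := π/3 + min (E u) (min (E (u - 2*π/3)) (E (u - 4*π/3)))
def Hfun (u : ℝ) : ℝ := E (u - 2*π/3) + E (u - 4*π/3) - E (u - π)

lemma GH_A {u : ℝ} (h1 : -π ≤ u) (h2 : u ≤ -(2*π/3)) :
    Gfun u = -u - π/3 ∧ Hfun u = -u - π/3 := by
  have pi := Real.pi_pos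
  have e1 : E u = -u := by
    rw [E_eq_abs h1 (by linarith), _root_.abs_of_nonpos (by linarith)]
  have e2 : E (u - 2*π/3) = u + 4*π/3 := by
    rw [show u - 2*π/3 = (u + 4*π/3) - 2*π by ring, E_sub_two_pi,
      E_eq_abs (by linarith) (by linarith), _root_.abs_of_nonneg (by linarith)]
  have e3 : E (u - 4*π/3) = -(u + 2*π/3) := by
    rw [show u - 4*π/3 = (u + 2*π/3) - 2*π by ring, E_sub_two_pi,
      E_eq_abs (by linarith) (by linarith), _root_.abs_of_nonpos (by linarith)]
  have e4 : E (u - π) = u + π := by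
    rw [show u - π = (u + π) - 2*π by ring, E_sub_two_pi,
      E_eq_abs (by linarith) (by linarith), _root_.abs_of_nonneg (by linarith)]
  refine ⟨?_, ?_⟩
  · unfold Gfun
    rw [e1, e2, e3, min_eq_right (by linarith : -(u + 2*π/3) ≤ u + 4*π/3),
      min_eq_right (by linarith : -(u + 2*π/3) ≤ -u)]
    ring
  · unfold Hfun; rw [e2, e3, e4]; ring

lemma GH_B {u : ℝ} (h1 : -(2*π/3) ≤ u) (h2 : u ≤ -(π/3)) :
    Gfun u = u + π ∧ Hfun u = u + π := by
  have pi := Real.pi_pos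
  have e1 : E u = -u := by
    rw [E_eq_abs (by linarith) (by linarith), _root_.abs_of_nonpos (by linarith)]
  have e2 : E (u - 2*π/3) = u + 4*π/3 := by
    rw [show u - 2*π/3 = (u + 4*π/3) - 2*π by ring, E_sub_two_pi,
      E_eq_abs (by linarith) (by linarith), _root_.abs_of_nonneg (by linarith)]
  have e3 : E (u - 4*π/3) = u + 2*π/3 := by
    rw [show u - 4*π/3 = (u + 2*π/3) - 2*π by ring, E_sub_two_pi,
      E_eq_abs (by linarith) (by linarith), _root_.abs_of_nonneg (by linarith)]
  have e4 : E (u - π) = u + π := by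
    rw [show u - π = (u + π) - 2*π by ring, E_sub_two_pi,
      E_eq_abs (by linarith) (by linarith), _root_.abs_of_nonneg (by linarith)]
  refine ⟨?_, ?_⟩
  · unfold Gfun
    rw [e1, e2, e3, min_eq_right (by linarith : u + 2*π/3 ≤ u + 4*π/3),
      min_eq_right (by linarith : u + 2*π/3 ≤ -u)]
    ring
  · unfold Hfun; rw [e2, e3, e4]; ring

lemma GH_C {u : ℝ} (h1 : -(π/3) ≤ u) (h2 : u ≤ 0) :
    Gfun u = π/3 - u ∧ Hfun u = π/3 - u := by
  have pi := Real.pi_pos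
  have e1 : E u = -u := by
    rw [E_eq_abs (by linarith) (by linarith), _root_.abs_of_nonpos (by linarith)]
  have e2 : E (u - 2*π/3) = 2*π/3 - u := by
    rw [E_eq_abs (by linarith) (by linarith), _root_.abs_of_nonpos (by linarith)]; ring
  have e3 : E (u - 4*π/3) = u + 2*π/3 := by
    rw [show u - 4*π/3 = (u + 2*π/3) - 2*π by ring, E_sub_two_pi,
      E_eq_abs (by linarith) (by linarith), _root_.abs_of_nonneg (by linarith)]
  have e4 : E (u - π) = u + π := by
    rw [show u - π = (u + π) - 2*π by ring, E_sub_two_pi,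
      E_eq_abs (by linarith) (by linarith), _root_.abs_of_nonneg (by linarith)]
  refine ⟨?_, ?_⟩
  · unfold Gfun
    rw [e1, e2, e3, min_eq_right (by linarith : u + 2*π/3 ≤ 2*π/3 - u),
      min_eq_left (by linarith : -u ≤ u + 2*π/3)]
    ring
  · unfold Hfun; rw [e2, e3, e4]; ring

lemma GH_D {u : ℝ} (h1 : 0 ≤ u) (h2 : u ≤ π/3) :
    Gfun u = π/3 + u ∧ Hfun u = π/3 + u := by
  have pi := Real.pi_pos
  have e1 : E u = u := by
    rw [E_eq_abs (by linarith) (by linarith), _root_.abs_of_nonneg (by linarith)]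
  have e2 : E (u - 2*π/3) = 2*π/3 - u := by
    rw [E_eq_abs (by linarith) (by linarith), _root_.abs_of_nonpos (by linarith)]; ring
  have e3 : E (u - 4*π/3) = u + 2*π/3 := by
    rw [show u - 4*π/3 = (u + 2*π/3) - 2*π by ring, E_sub_two_pi,
      E_eq_abs (by linarith) (by linarith), _root_.abs_of_nonneg (by linarith)]
  have e4 : E (u - π) = π - u := by
    rw [E_eq_abs (by linarith) (by linarith), _root_.abs_of_nonpos (by linarith)]; ring
  refine ⟨?_, ?_⟩
  · unfold Gfun
    rw [e1, e2, e3, min_eq_left (by linarith : 2*π/3 - u ≤ u + 2*π/3),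
      min_eq_left (by linarith : u ≤ 2*π/3 - u)]
  · unfold Hfun; rw [e2, e3, e4]; ring

lemma GH_E {u : ℝ} (h1 : π/3 ≤ u) (h2 : u ≤ 2*π/3) :
    Gfun u = π - u ∧ Hfun u = π - u := by
  have pi := Real.pi_pos
  have e1 : E u = u := by
    rw [E_eq_abs (by linarith) (by linarith), _root_.abs_of_nonneg (by linarith)]
  have e2 : E (u - 2*π/3) = 2*π/3 - u := by
    rw [E_eq_abs (by linarith) (by linarith), _root_.abs_of_nonpos (by linarith)]; ring
  have e3 : E (u - 4*π/3) = 4*π/3 - u := by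
    rw [E_eq_abs (by linarith) (by linarith), _root_.abs_of_nonpos (by linarith)]; ring
  have e4 : E (u - π) = π - u := by
    rw [E_eq_abs (by linarith) (by linarith), _root_.abs_of_nonpos (by linarith)]; ring
  refine ⟨?_, ?_⟩
  · unfold Gfun
    rw [e1, e2, e3, min_eq_left (by linarith : 2*π/3 - u ≤ 4*π/3 - u),
      min_eq_right (by linarith : 2*π/3 - u ≤ u)]
    ring
  · unfold Hfun; rw [e2, e3, e4]; ring

lemma GH_F {u : ℝ} (h1 : 2*π/3 ≤ u) (h2 : u ≤ π) :
    Gfun u = u - π/3 ∧ Hfun u = u - π/3 := by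
  have pi := Real.pi_pos
  have e1 : E u = u := by
    rw [E_eq_abs (by linarith) (by linarith), _root_.abs_of_nonneg (by linarith)]
  have e2 : E (u - 2*π/3) = u - 2*π/3 := by
    rw [E_eq_abs (by linarith) (by linarith), _root_.abs_of_nonneg (by linarith)]
  have e3 : E (u - 4*π/3) = 4*π/3 - u := by
    rw [E_eq_abs (by linarith) (by linarith), _root_.abs_of_nonpos (by linarith)]; ring
  have e4 : E (u - π) = π - u := by
    rw [E_eq_abs (by linarith) (by linarith), _root_.abs_of_nonpos (by linarith)]; ring
  refine ⟨?_, ?_⟩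
  · unfold Gfun
    rw [e1, e2, e3, min_eq_left (by linarith : u - 2*π/3 ≤ 4*π/3 - u),
      min_eq_right (by linarith : u - 2*π/3 ≤ u)]
    ring
  · unfold Hfun; rw [e2, e3, e4]; ring

lemma Gfun_period (u : ℝ) (k : ℤ) : Gfun (u + k*(2*π)) = Gfun u := by
  unfold Gfun
  rw [show u + k*(2*π) - 2*π/3 = (u - 2*π/3) + k*(2*π) by ring,
    show u + k*(2*π) - 4*π/3 = (u - 4*π/3) + k*(2*π) by ring,
    E_period, E_period, E_period]

lemma Hfun_period (u : ℝ) (k : ℤ) : Hfun (u + k*(2*π)) = Hfun u := by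
  unfold Hfun
  rw [show u + k*(2*π) - 2*π/3 = (u - 2*π/3) + k*(2*π) by ring,
    show u + k*(2*π) - 4*π/3 = (u - 4*π/3) + k*(2*π) by ring,
    show u + k*(2*π) - π = (u - π) + k*(2*π) by ring,
    E_period, E_period, E_period]

lemma G_eq_H_core {u : ℝ} (h1 : -π ≤ u) (h2 : u ≤ π) : Gfun u = Hfun u := by
  rcases le_total u (-(2*π/3)) with h | h
  · rw [(GH_A h1 h).1, (GH_A h1 h).2]
  rcases le_total u (-(π/3)) with h' | h'
  · rw [(GH_B h h').1, (GH_B h h').2]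
  rcases le_total u 0 with h'' | h''
  · rw [(GH_C h' h'').1, (GH_C h' h'').2]
  rcases le_total u (π/3) with h3 | h3
  · rw [(GH_D h'' h3).1, (GH_D h'' h3).2]
  rcases le_total u (2*π/3) with h4 | h4
  · rw [(GH_E h3 h4).1, (GH_E h3 h4).2]
  · rw [(GH_F h4 h2).1, (GH_F h4 h2).2]

lemma G_eq_H (u : ℝ) : Gfun u = Hfun u := by
  obtain ⟨k, hk⟩ := red_spec u
  have hm := red_mem u
  calc Gfun u = Gfun (red u + k*(2*π)) := by rw [← hk]
    _ = Gfun (red u) := Gfun_period _ k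
    _ = Hfun (red u) := G_eq_H_core (le_of_lt hm.1) hm.2
    _ = Hfun (red u + k*(2*π)) := (Hfun_period _ k).symm
    _ = Hfun u := by rw [← hk]


lemma pi23_pos : (0:ℝ) < 2*π/3 := by positivity

def fP (x : Circle) : ℝ :=
  if toIocMod pi23_pos (-(π/3)) (Complex.arg (x:ℂ)) ≤ 0 then -1 else 1

lemma fP_bd (x : Circle) : -1 ≤ fP x ∧ fP x ≤ 1 := by
  unfold fP; split <;> norm_num

lemma toIoc_eval {t c : ℝ} (z : ℤ) (h1 : -(π/3) < c) (h2 : c ≤ π/3) (ht : t = c + z * (2*π/3)) :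
    toIocMod pi23_pos (-(π/3)) t = c := by
  rw [toIocMod_eq_iff]
  exact ⟨⟨h1, by linarith⟩, z, by rw [zsmul_eq_mul]; linarith⟩

lemma toIoc23_congr (s t : ℝ) (k : ℤ) (h : s = t + k*(2*π)) :
    toIocMod pi23_pos (-(π/3)) s = toIocMod pi23_pos (-(π/3)) t := by
  have h3 : s = t + (3*k) • (2*π/3) := by rw [zsmul_eq_mul]; push_cast; linarith
  rw [h3, toIocMod_add_zsmul]

lemma arg_exp_eq_red (t : ℝ) : Complex.arg ((Circle.exp t : ℂ)) = red t := by
  rw [Circle.coe_exp, Complex.arg_exp_mul_I]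
  rfl

lemma fP_exp (t : ℝ) :
    fP (Circle.exp t) = if toIocMod pi23_pos (-(π/3)) t ≤ 0 then -1 else 1 := by
  unfold fP
  rw [arg_exp_eq_red]
  obtain ⟨k, hk⟩ := red_spec t
  rw [toIoc23_congr (red t) t (-k) (by push_cast; linarith)]

lemma fPe_neg {t : ℝ} (z : ℤ) (h1 : -(π/3) < t - z*(2*π/3)) (h2 : t - z*(2*π/3) ≤ 0) :
    fP (Circle.exp t) = -1 := by
  rw [fP_exp, toIoc_eval z h1 (by linarith [Real.pi_pos]) (by push_cast; ring), if_pos h2]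

lemma fPe_pos {t : ℝ} (z : ℤ) (h1 : 0 < t - z*(2*π/3)) (h2 : t - z*(2*π/3) ≤ π/3) :
    fP (Circle.exp t) = 1 := by
  rw [fP_exp, toIoc_eval z (by linarith [Real.pi_pos]) h2 (by push_cast; ring),
    if_neg (by linarith)]

lemma leftDeriv_Gfun {a c d σ β : ℝ} (hc : c < a) (had : a ≤ d)
    (hlin : ∀ u, c ≤ u → u ≤ d → Gfun u = σ * u + β) :
    Filter.Tendsto (fun t : ℝ => (Gfun (t + a) - Gfun a) / t)
      (nhdsWithin 0 (Set.Iio 0)) (nhds σ) := by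
  have hmem : Set.Ioo (c - a) 0 ∈ nhdsWithin (0:ℝ) (Set.Iio 0) :=
    Ioo_mem_nhdsLT_of_mem ⟨by linarith, le_rfl⟩
  have heq : (fun _ : ℝ => σ) =ᶠ[nhdsWithin (0:ℝ) (Set.Iio 0)]
      fun t => (Gfun (t + a) - Gfun a) / t := by
    filter_upwards [hmem] with t ht
    rw [hlin (t + a) (by linarith [ht.1]) (by linarith [ht.2]), hlin a hc.le had]
    have htne : t ≠ 0 := ne_of_lt ht.2
    field_simp
    ring
  exact Filter.Tendsto.congr' heq tendsto_const_nhds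

lemma hasLeftDeriv {f : Circle → ℝ} (hfg : ∀ u : ℝ, f (Circle.exp u) = Gfun u) (x : Circle) :
    HasLeftDerivCircleAt f (fP x) x := by
  have pi := Real.pi_pos
  set a := Complex.arg (x:ℂ) with ha
  have hx : Circle.exp a = x := Circle.exp_arg x
  have h1 : -π < a := Complex.neg_pi_lt_arg _
  have h2 : a ≤ π := Complex.arg_le_pi _
  have hkey : ∀ t : ℝ, f (Circle.exp t * x) = Gfun (t + a) := by
    intro t; rw [← hx, ← Circle.exp_add, hfg]
  have hfx : f x = Gfun a := by rw [← hx, hfg]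
  unfold HasLeftDerivCircleAt
  simp_rw [hkey, hfx]
  have hfPeval : ∀ c : ℝ, -(π/3) < c → c ≤ π/3 → ∀ z : ℤ, a = c + z * (2*π/3) →
      fP x = (if c ≤ 0 then -1 else 1) := by
    intro c hc1 hc2 z hz
    unfold fP
    rw [← ha, toIoc_eval z hc1 hc2 hz]
  rcases le_or_gt a (-(2*π/3)) with h | h
  · rw [hfPeval (a + 2*π/3) (by linarith) (by linarith) (-1) (by push_cast; ring),
      if_pos (by linarith)]
    exact leftDeriv_Gfun (β := -(π/3)) h1 h (fun u hu1 hu2 => by rw [(GH_A hu1 hu2).1]; ring)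
  rcases le_or_gt a (-(π/3)) with h' | h'
  · rw [hfPeval (a + 2*π/3) (by linarith) (by linarith) (-1) (by push_cast; ring),
      if_neg (by push_neg; linarith)]
    exact leftDeriv_Gfun h h' (fun u hu1 hu2 => by rw [(GH_B hu1 hu2).1]; ring)
  rcases le_or_gt a 0 with h'' | h''
  · rw [hfPeval a (by linarith) (by linarith) 0 (by push_cast; ring), if_pos h'']
    exact leftDeriv_Gfun (β := π/3) h' h'' (fun u hu1 hu2 => by rw [(GH_C hu1 hu2).1]; ring)
  rcases le_or_gt a (π/3) with h3 | h3
  · rw [hfPeval a (by linarith) (by linarith) 0 (by push_cast; ring),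
      if_neg (by push_neg; linarith)]
    exact leftDeriv_Gfun (β := π/3) h'' h3 (fun u hu1 hu2 => by rw [(GH_D hu1 hu2).1]; ring)
  rcases le_or_gt a (2*π/3) with h4 | h4
  · rw [hfPeval (a - 2*π/3) (by linarith) (by linarith) 1 (by push_cast; ring),
      if_pos (by linarith)]
    exact leftDeriv_Gfun h3 h4 (fun u hu1 hu2 => by rw [(GH_E hu1 hu2).1]; ring)
  · rw [hfPeval (a - 2*π/3) (by linarith) (by linarith) 1 (by push_cast; ring),
      if_neg (by push_neg; linarith)]
    exact leftDeriv_Gfun (β := -(π/3)) h4 h2 (fun u hu1 hu2 => by rw [(GH_F hu1 hu2).1]; ring)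


lemma eVariationOn_neg (g : ℝ → ℝ) (s : Set ℝ) :
    eVariationOn (fun t => -g t) s = eVariationOn g s := by
  unfold eVariationOn
  apply iSup_congr
  intro p
  exact Finset.sum_congr rfl fun i _ => edist_neg_neg _ _

lemma evar_piece_mono {g : ℝ → ℝ} {c d : ℝ} (hcd : c ≤ d) (hgcd : g c ≤ g d)
    (hbd : ∀ t, -1 ≤ g t ∧ g t ≤ 1)
    (hconst : ∀ x y, c < x → x ≤ y → y ≤ d → g x = g y) :
    eVariationOn g (Set.Icc c d) ≤ ENNReal.ofReal 2 := by
  have hmono : MonotoneOn g (Set.Icc c d) := by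
    intro x hx y hy hxy
    rcases eq_or_lt_of_le hx.1 with h | h
    · rcases eq_or_lt_of_le hy.1 with h' | h'
      · rw [← h, ← h']
      · rw [← h, hconst y d h' hy.2 le_rfl]; exact hgcd
    · exact le_of_eq (hconst x y h hxy hy.2)
  have h := hmono.eVariationOn_le (Set.mem_Icc.mpr ⟨le_rfl, hcd⟩) (Set.mem_Icc.mpr ⟨hcd, le_rfl⟩)
  rw [Set.inter_self] at h
  exact h.trans (ENNReal.ofReal_le_ofReal (by linarith [(hbd c).1, (hbd d).2]))

lemma evar_piece_le {g : ℝ → ℝ} {c d : ℝ} (hcd : c ≤ d)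
    (hbd : ∀ t, -1 ≤ g t ∧ g t ≤ 1)
    (hconst : ∀ x y, c < x → x ≤ y → y ≤ d → g x = g y) :
    eVariationOn g (Set.Icc c d) ≤ ENNReal.ofReal 2 := by
  rcases le_total (g c) (g d) with hgc | hgc
  · exact evar_piece_mono hcd hgc hbd hconst
  · rw [← eVariationOn_neg]
    exact evar_piece_mono hcd (by linarith) (fun t => ⟨by linarith [(hbd t).2], by linarith [(hbd t).1]⟩)
      (fun x y hx hxy hy => by rw [hconst x y hx hxy hy])

set_option maxHeartbeats 1000000 in
lemma circleTV_fP : circleTV fP = 12 := by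
  have pi := Real.pi_pos
  set g : ℝ → ℝ := fP ∘ Circle.exp with hg
  -- values of g on the pieces
  have vneg : ∀ t : ℝ, ∀ z : ℤ, -(π/3) < t - z*(2*π/3) → t - z*(2*π/3) ≤ 0 → g t = -1 :=
    fun t z h1 h2 => fPe_neg z h1 h2
  have vpos : ∀ t : ℝ, ∀ z : ℤ, 0 < t - z*(2*π/3) → t - z*(2*π/3) ≤ π/3 → g t = 1 :=
    fun t z h1 h2 => fPe_pos z h1 h2
  have v0 : g 0 = -1 := vneg 0 0 (by push_cast; linarith) (by push_cast; linarith)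
  have v1 : g (π/3) = 1 := vpos (π/3) 0 (by push_cast; linarith) (by push_cast; linarith)
  have v2 : g (2*π/3) = -1 := vneg (2*π/3) 1 (by push_cast; linarith) (by push_cast; linarith)
  have v3 : g π = 1 := vpos π 1 (by push_cast; linarith) (by push_cast; linarith)
  have v4 : g (4*π/3) = -1 := vneg (4*π/3) 2 (by push_cast; linarith) (by push_cast; linarith)
  have v5 : g (5*π/3) = 1 := vpos (5*π/3) 2 (by push_cast; linarith) (by push_cast; linarith)
  have v6 : g (2*π) = -1 := vneg (2*π) 3 (by push_cast; linarith) (by push_cast; linarith)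
  have hbd : ∀ t, -1 ≤ g t ∧ g t ≤ 1 := fun t => fP_bd _
  have upper : eVariationOn g (Set.Icc 0 (2*π)) ≤ 12 := by
    have split : ∀ a b c : ℝ, 0 ≤ a → a ≤ b → b ≤ c → c ≤ 2*π →
        eVariationOn g (Set.Icc 0 (2*π) ∩ Set.Icc a b) +
        eVariationOn g (Set.Icc 0 (2*π) ∩ Set.Icc b c) =
        eVariationOn g (Set.Icc 0 (2*π) ∩ Set.Icc a c) := by
      intro a b c h0a hab hbc hc2
      exact eVariationOn.Icc_add_Icc g hab hbc (Set.mem_Icc.mpr ⟨by linarith, by linarith⟩)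
    have inter : ∀ a b : ℝ, 0 ≤ a → b ≤ 2*π →
        Set.Icc 0 (2*π) ∩ Set.Icc a b = Set.Icc a b := by
      intro a b h0a hb2
      exact Set.inter_eq_self_of_subset_right (Set.Icc_subset_Icc h0a hb2)
    have piece : ∀ c d : ℝ, c ≤ d →
        (∀ x y : ℝ, c < x → x ≤ y → y ≤ d → g x = g y) →
        eVariationOn g (Set.Icc c d) ≤ ENNReal.ofReal 2 :=
      fun c d hcd hconst => evar_piece_le hcd hbd hconst
    -- piece constancy lemmas
    have p1 : eVariationOn g (Set.Icc 0 (π/3)) ≤ ENNReal.ofReal 2 := by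
      refine piece _ _ (by linarith) (fun x y hx hxy hy => ?_)
      rw [vpos x 0 (by push_cast; linarith) (by push_cast; linarith),
        vpos y 0 (by push_cast; linarith) (by push_cast; linarith)]
    have p2 : eVariationOn g (Set.Icc (π/3) (2*π/3)) ≤ ENNReal.ofReal 2 := by
      refine piece _ _ (by linarith) (fun x y hx hxy hy => ?_)
      rw [vneg x 1 (by push_cast; linarith) (by push_cast; linarith),
        vneg y 1 (by push_cast; linarith) (by push_cast; linarith)]
    have p3 : eVariationOn g (Set.Icc (2*π/3) π) ≤ ENNReal.ofReal 2 := by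
      refine piece _ _ (by linarith) (fun x y hx hxy hy => ?_)
      rw [vpos x 1 (by push_cast; linarith) (by push_cast; linarith),
        vpos y 1 (by push_cast; linarith) (by push_cast; linarith)]
    have p4 : eVariationOn g (Set.Icc π (4*π/3)) ≤ ENNReal.ofReal 2 := by
      refine piece _ _ (by linarith) (fun x y hx hxy hy => ?_)
      rw [vneg x 2 (by push_cast; linarith) (by push_cast; linarith),
        vneg y 2 (by push_cast; linarith) (by push_cast; linarith)]
    have p5 : eVariationOn g (Set.Icc (4*π/3) (5*π/3)) ≤ ENNReal.ofReal 2 := by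
      refine piece _ _ (by linarith) (fun x y hx hxy hy => ?_)
      rw [vpos x 2 (by push_cast; linarith) (by push_cast; linarith),
        vpos y 2 (by push_cast; linarith) (by push_cast; linarith)]
    have p6 : eVariationOn g (Set.Icc (5*π/3) (2*π)) ≤ ENNReal.ofReal 2 := by
      refine piece _ _ (by linarith) (fun x y hx hxy hy => ?_)
      rw [vneg x 3 (by push_cast; linarith) (by push_cast; linarith),
        vneg y 3 (by push_cast; linarith) (by push_cast; linarith)]
    have e06 : eVariationOn g (Set.Icc 0 (2*π) ∩ Set.Icc 0 (2*π)) = eVariationOn g (Set.Icc 0 (2*π)) := by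
      rw [Set.inter_self]
    calc eVariationOn g (Set.Icc 0 (2*π))
        = eVariationOn g (Set.Icc 0 (2*π) ∩ Set.Icc 0 (2*π)) := e06.symm
      _ = eVariationOn g (Set.Icc 0 (2*π) ∩ Set.Icc 0 π) +
          eVariationOn g (Set.Icc 0 (2*π) ∩ Set.Icc π (2*π)) :=
          (split 0 π (2*π) le_rfl (by linarith) (by linarith) le_rfl).symm
      _ = (eVariationOn g (Set.Icc 0 (2*π) ∩ Set.Icc 0 (π/3)) +
           eVariationOn g (Set.Icc 0 (2*π) ∩ Set.Icc (π/3) π)) +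
          eVariationOn g (Set.Icc 0 (2*π) ∩ Set.Icc π (2*π)) := by
          rw [split 0 (π/3) π le_rfl (by linarith) (by linarith) (by linarith)]
      _ = (eVariationOn g (Set.Icc 0 (2*π) ∩ Set.Icc 0 (π/3)) +
           (eVariationOn g (Set.Icc 0 (2*π) ∩ Set.Icc (π/3) (2*π/3)) +
            eVariationOn g (Set.Icc 0 (2*π) ∩ Set.Icc (2*π/3) π))) +
          eVariationOn g (Set.Icc 0 (2*π) ∩ Set.Icc π (2*π)) := by
          rw [split (π/3) (2*π/3) π (by linarith) (by linarith) (by linarith) (by linarith)]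
      _ = (eVariationOn g (Set.Icc 0 (2*π) ∩ Set.Icc 0 (π/3)) +
           (eVariationOn g (Set.Icc 0 (2*π) ∩ Set.Icc (π/3) (2*π/3)) +
            eVariationOn g (Set.Icc 0 (2*π) ∩ Set.Icc (2*π/3) π))) +
          (eVariationOn g (Set.Icc 0 (2*π) ∩ Set.Icc π (4*π/3)) +
           eVariationOn g (Set.Icc 0 (2*π) ∩ Set.Icc (4*π/3) (2*π))) := by
          rw [split π (4*π/3) (2*π) (by linarith) (by linarith) (by linarith) le_rfl]
      _ = (eVariationOn g (Set.Icc 0 (2*π) ∩ Set.Icc 0 (π/3)) +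
           (eVariationOn g (Set.Icc 0 (2*π) ∩ Set.Icc (π/3) (2*π/3)) +
            eVariationOn g (Set.Icc 0 (2*π) ∩ Set.Icc (2*π/3) π))) +
          (eVariationOn g (Set.Icc 0 (2*π) ∩ Set.Icc π (4*π/3)) +
           (eVariationOn g (Set.Icc 0 (2*π) ∩ Set.Icc (4*π/3) (5*π/3)) +
            eVariationOn g (Set.Icc 0 (2*π) ∩ Set.Icc (5*π/3) (2*π)))) := by
          rw [split (4*π/3) (5*π/3) (2*π) (by linarith) (by linarith) (by linarith) le_rfl]
      _ ≤ (ENNReal.ofReal 2 + (ENNReal.ofReal 2 + ENNReal.ofReal 2)) +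
          (ENNReal.ofReal 2 + (ENNReal.ofReal 2 + ENNReal.ofReal 2)) := by
          rw [inter 0 (π/3) le_rfl (by linarith), inter (π/3) (2*π/3) (by linarith) (by linarith),
            inter (2*π/3) π (by linarith) (by linarith), inter π (4*π/3) (by linarith) (by linarith),
            inter (4*π/3) (5*π/3) (by linarith) (by linarith), inter (5*π/3) (2*π) (by linarith) le_rfl]
          exact add_le_add (add_le_add p1 (add_le_add p2 p3)) (add_le_add p4 (add_le_add p5 p6))
      _ = 12 := by
          rw [show ENNReal.ofReal 2 = (2:ℝ≥0∞) by norm_num]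
          norm_num
  have lower : (12:ℝ≥0∞) ≤ eVariationOn g (Set.Icc 0 (2*π)) := by
    set u : ℕ → ℝ := fun i => (min i 6 : ℕ) * (π/3) with hu
    have hum : Monotone u := by
      intro i j hij
      have : (min i 6 : ℕ) ≤ (min j 6 : ℕ) := min_le_min hij le_rfl
      have : ((min i 6 : ℕ) : ℝ) ≤ ((min j 6 : ℕ) : ℝ) := by exact_mod_cast this
      show ((i ⊓ 6 : ℕ) : ℝ) * (π/3) ≤ ((j ⊓ 6 : ℕ) : ℝ) * (π/3)
      nlinarith [pi]
    have hus : ∀ i, u i ∈ Set.Icc (0:ℝ) (2*π) := by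
      intro i
      have h6 : ((min i 6 : ℕ) : ℝ) ≤ 6 := by exact_mod_cast min_le_right i 6
      have h0 : (0:ℝ) ≤ ((min i 6 : ℕ) : ℝ) := by positivity
      constructor
      · show (0:ℝ) ≤ ((i ⊓ 6 : ℕ) : ℝ) * (π/3); positivity
      · show ((i ⊓ 6 : ℕ) : ℝ) * (π/3) ≤ 2*π; nlinarith
    have hsum := eVariationOn.sum_le (f := g) (n := 6) hum hus
    have huv : ∀ i : ℕ, i ≤ 6 → u i = i * (π/3) := by
      intro i hi
      have h' : i ⊓ 6 = i := by omega
      show ((i ⊓ 6 : ℕ) : ℝ) * (π/3) = i * (π/3)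
      rw [h']
    have e0 : u 0 = 0 := by rw [huv 0 (by norm_num)]; norm_num
    have e1 : u 1 = π/3 := by rw [huv 1 (by norm_num)]; push_cast; ring
    have e2 : u 2 = 2*π/3 := by rw [huv 2 (by norm_num)]; push_cast; ring
    have e3 : u 3 = π := by rw [huv 3 (by norm_num)]; push_cast; ring
    have e4 : u 4 = 4*π/3 := by rw [huv 4 (by norm_num)]; push_cast; ring
    have e5 : u 5 = 5*π/3 := by rw [huv 5 (by norm_num)]; push_cast; ring
    have e6 : u 6 = 2*π := by rw [huv 6 (by norm_num)]; push_cast; ring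
    have ed1 : edist (1:ℝ) (-1) = ENNReal.ofReal 2 := by
      rw [edist_dist, Real.dist_eq]; norm_num
    have ed2 : edist (-1:ℝ) (1:ℝ) = ENNReal.ofReal 2 := by
      rw [edist_dist, Real.dist_eq]; norm_num
    have v0 : g 0 = -1 := fPe_neg 0 (by push_cast; linarith) (by push_cast; linarith)
    have v1 : g (π/3) = 1 := fPe_pos 0 (by push_cast; linarith) (by push_cast; linarith)
    have v2 : g (2*π/3) = -1 := fPe_neg 1 (by push_cast; linarith) (by push_cast; linarith)
    have v3 : g π = 1 := fPe_pos 1 (by push_cast; linarith) (by push_cast; linarith)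
    have v4 : g (4*π/3) = -1 := fPe_neg 2 (by push_cast; linarith) (by push_cast; linarith)
    have v5 : g (5*π/3) = 1 := fPe_pos 2 (by push_cast; linarith) (by push_cast; linarith)
    have v6 : g (2*π) = -1 := fPe_neg 3 (by push_cast; linarith) (by push_cast; linarith)
    rw [Finset.sum_range_succ, Finset.sum_range_succ, Finset.sum_range_succ,
      Finset.sum_range_succ, Finset.sum_range_succ, Finset.sum_range_succ,
      Finset.sum_range_zero] at hsum
    rw [e0, e1, e2, e3, e4, e5, e6, v0, v1, v2, v3, v4, v5, v6] at hsum
    rw [ed1, ed2] at hsum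
    calc (12:ℝ≥0∞) = 0 + ENNReal.ofReal 2 + ENNReal.ofReal 2 + ENNReal.ofReal 2 +
        ENNReal.ofReal 2 + ENNReal.ofReal 2 + ENNReal.ofReal 2 := by
          rw [show ENNReal.ofReal 2 = (2:ℝ≥0∞) by norm_num]; norm_num
      _ ≤ eVariationOn g (Set.Icc 0 (2*π)) := hsum
  exact le_antisymm upper lower

lemma dS1_bounds (x y : Circle) : 0 ≤ dS1 x y ∧ dS1 x y ≤ π :=
  ⟨Real.arccos_nonneg _, Real.arccos_le_pi _⟩

lemma integrable_dS1 (x : Circle) (μ : Measure Circle) [IsFiniteMeasure μ] :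
    Integrable (fun y => dS1 x y) μ := by
  refine Integrable.mono' (integrable_const π) (continuous_dS1 x).aestronglyMeasurable
    (Filter.Eventually.of_forall fun y => ?_)
  rw [Real.norm_eq_abs, abs_le]
  exact ⟨by linarith [(dS1_bounds x y).1, (dS1_bounds x y).2, Real.pi_pos], (dS1_bounds x y).2⟩

lemma fx_eq_Gfun {f : Circle → ℝ} (hfg : ∀ u : ℝ, f (Circle.exp u) = Gfun u) (x : Circle) :
    f x = Gfun (Complex.arg (x:ℂ)) := by
  have h := hfg (Complex.arg (x:ℂ))
  rwa [Circle.exp_arg] at h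

lemma part1 {f : Circle → ℝ} (hfg : ∀ u : ℝ, f (Circle.exp u) = Gfun u) (x : Circle) :
    f x + f (antipode x) = π := by
  set a := Complex.arg (x:ℂ) with ha
  have hx : Circle.exp a = x := Circle.exp_arg x
  have h1 : f x = Hfun a := by rw [fx_eq_Gfun hfg, G_eq_H]
  have h2 : f (antipode x) = Hfun (π + a) := by
    have hax : antipode x = Circle.exp (π + a) := by
      unfold antipode; rw [Circle.exp_add, hx]
    rw [hax, hfg, G_eq_H]
  rw [h1, h2]
  unfold Hfun
  rw [show π + a - 2*π/3 = (a - 2*π/3) + π by ring,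
    show π + a - 4*π/3 = (a - 4*π/3) + π by ring,
    show π + a - π = (a - π) + π by ring]
  linarith [E_antipode (a - 2*π/3), E_antipode (a - 4*π/3), E_antipode (a - π)]

lemma Gfun_lip (s t : ℝ) : |Gfun s - Gfun t| ≤ |s - t| := by
  have hA := E_lip s t
  have hB := E_lip (s - 2*π/3) (t - 2*π/3)
  have hC := E_lip (s - 4*π/3) (t - 4*π/3)
  rw [show s - 2*π/3 - (t - 2*π/3) = s - t by ring] at hB
  rw [show s - 4*π/3 - (t - 4*π/3) = s - t by ring] at hC
  have h1 := abs_min_sub_min_le_max (E s) (min (E (s - 2*π/3)) (E (s - 4*π/3)))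
    (E t) (min (E (t - 2*π/3)) (E (t - 4*π/3)))
  have h2 := abs_min_sub_min_le_max (E (s - 2*π/3)) (E (s - 4*π/3))
    (E (t - 2*π/3)) (E (t - 4*π/3))
  have hg : Gfun s - Gfun t = min (E s) (min (E (s - 2*π/3)) (E (s - 4*π/3))) -
      min (E t) (min (E (t - 2*π/3)) (E (t - 4*π/3))) := by
    unfold Gfun; ring
  rw [hg]
  exact h1.trans (max_le hA (h2.trans (max_le hB hC)))

lemma part2 {f : Circle → ℝ} (hfg : ∀ u : ℝ, f (Circle.exp u) = Gfun u) :
    LipschitzCircle f := by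
  refine ⟨1, fun x y => ?_⟩
  set a := Complex.arg (x:ℂ) with ha
  have hx : Circle.exp a = x := Circle.exp_arg x
  obtain ⟨k, hk⟩ := red_spec (a - Complex.arg (y:ℂ))
  set b := Complex.arg (y:ℂ) + k * (2*π) with hb
  have hyb : Circle.exp b = y := by
    rw [hb]
    have : Circle.exp (Complex.arg (y:ℂ) + k * (2*π)) = Circle.exp (Complex.arg (y:ℂ)) :=
      Circle.exp_eq_exp.mpr ⟨k, rfl⟩
    rw [this, Circle.exp_arg]
  have hab : a - b = red (a - Complex.arg (y:ℂ)) := by rw [hb]; linarith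
  have hmem := red_mem (a - Complex.arg (y:ℂ))
  have hd : dS1 x y = |a - b| := by
    rw [← hx, ← hyb, dS1_exp, hab, E_eq_abs (le_of_lt hmem.1) hmem.2]
  have hfxy : |f x - f y| = |Gfun a - Gfun b| := by
    rw [← hx, ← hyb, hfg, hfg]
  rw [hfxy, hd, one_mul]
  exact Gfun_lip a b

-- the three points for the signed measure
lemma exp_ne_exp_of_arg {s t : ℝ} (hs1 : -π < s) (hs2 : s ≤ π) (ht1 : -π < t) (ht2 : t ≤ π)
    (hst : s ≠ t) : Circle.exp s ≠ Circle.exp t := by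
  intro h
  exact hst (by rw [← Circle.arg_exp hs1 hs2, h, Circle.arg_exp ht1 ht2])

lemma hp1 : Circle.exp (2*π/3) ≠ Circle.exp π := by
  have pi := Real.pi_pos
  exact exp_ne_exp_of_arg (by linarith) (by linarith) (by linarith) le_rfl (by linarith)

lemma hp2 : Circle.exp (4*π/3) ≠ Circle.exp π := by
  have pi := Real.pi_pos
  have h : Circle.exp (4*π/3) = Circle.exp (-(2*π/3)) :=
    Circle.exp_eq_exp.mpr ⟨1, by push_cast; ring⟩
  rw [h]
  exact exp_ne_exp_of_arg (by linarith) (by linarith) (by linarith) le_rfl (by linarith)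

def jd : JordanDecomposition Circle where
  posPart := Measure.dirac (Circle.exp (2*π/3)) + Measure.dirac (Circle.exp (4*π/3))
  negPart := Measure.dirac (Circle.exp π)
  mutuallySingular := by
    refine ⟨{Circle.exp π}, measurableSet_singleton _, ?_, ?_⟩
    · rw [Measure.add_apply, Measure.dirac_apply' _ (measurableSet_singleton _),
        Measure.dirac_apply' _ (measurableSet_singleton _),
        Set.indicator_of_notMem (by simpa using hp1),
        Set.indicator_of_notMem (by simpa using hp2)]
      simp
    · rw [Measure.dirac_apply' _ (measurableSet_singleton _).compl,
        Set.indicator_of_notMem (by simp)]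

lemma jd_pos : jd.posPart = Measure.dirac (Circle.exp (2*π/3)) + Measure.dirac (Circle.exp (4*π/3)) := rfl
lemma jd_neg : jd.negPart = Measure.dirac (Circle.exp π) := rfl

lemma part4 {f : Circle → ℝ} (hfg : ∀ u : ℝ, f (Circle.exp u) = Gfun u) :
    ∃ lam : SignedMeasure Circle, ∀ x : Circle, f x = fRep lam x := by
  refine ⟨jd.toSignedMeasure, fun x => ?_⟩
  unfold fRep sInt
  rw [MeasureTheory.JordanDecomposition.toJordanDecomposition_toSignedMeasure, jd_pos, jd_neg]
  have hsm := (continuous_dS1 x).stronglyMeasurable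
  rw [integral_add_measure (integrable_dS1 x _) (integrable_dS1 x _),
    integral_dirac' _ _ hsm, integral_dirac' _ _ hsm, integral_dirac' _ _ hsm]
  have ha : Circle.exp (Complex.arg (x:ℂ)) = x := Circle.exp_arg x
  set a := Complex.arg (x:ℂ) with haa
  have d1 : dS1 x (Circle.exp (2*π/3)) = E (a - 2*π/3) := by rw [← ha, dS1_exp]
  have d2 : dS1 x (Circle.exp (4*π/3)) = E (a - 4*π/3) := by rw [← ha, dS1_exp]
  have d3 : dS1 x (Circle.exp π) = E (a - π) := by rw [← ha, dS1_exp]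
  rw [fx_eq_Gfun hfg, G_eq_H, d1, d2, d3]
  unfold Hfun
  ring

lemma part5 {f : Circle → ℝ} (hfg : ∀ u : ℝ, f (Circle.exp u) = Gfun u) :
    ¬ ∃ ν : Measure Circle, IsFiniteMeasure ν ∧ ∀ x : Circle, f x = ∫ y, dS1 x y ∂ν := by
  have pi := Real.pi_pos
  rintro ⟨ν, hν, hrep⟩
  haveI := hν
  -- pointwise bound
  have hψ : ∀ y : Circle, π/3 ≤ dS1 (Circle.exp 0) y - dS1 (Circle.exp (π/3)) y
      + dS1 (Circle.exp (2*π/3)) y := by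
    intro y
    have hy : Circle.exp (Complex.arg (y:ℂ)) = y := Circle.exp_arg y
    set b := Complex.arg (y:ℂ)
    rw [← hy, dS1_exp, dS1_exp, dS1_exp]
    have e0 : E (0 - b) = E b := by rw [show (0:ℝ) - b = -b by ring, E_neg]
    have e1 : E (π/3 - b) = E (b - π/3) := by rw [show π/3 - b = -(b - π/3) by ring, E_neg]
    have e2 : E (2*π/3 - b) = E (b - 2*π/3) := by
      rw [show 2*π/3 - b = -(b - 2*π/3) by ring, E_neg]
    rw [e0, e1, e2]
    have hH : E b - E (b - π/3) + E (b - 2*π/3) = Hfun (b + 2*π/3) := by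
      unfold Hfun
      rw [show b + 2*π/3 - 2*π/3 = b by ring, show b + 2*π/3 - 4*π/3 = b - 2*π/3 by ring,
        show b + 2*π/3 - π = b - π/3 by ring]
      ring
    rw [hH, ← G_eq_H]
    unfold Gfun
    have : (0:ℝ) ≤ min (E (b + 2*π/3)) (min (E (b + 2*π/3 - 2*π/3)) (E (b + 2*π/3 - 4*π/3))) :=
      le_min (E_nonneg _) (le_min (E_nonneg _) (E_nonneg _))
    linarith
  -- values of f
  have hf0 : f (Circle.exp 0) = π/3 := by
    rw [hfg, (GH_D le_rfl (by linarith)).1]; ring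
  have hf1 : f (Circle.exp (π/3)) = 2*π/3 := by
    rw [hfg, (GH_E le_rfl (by linarith)).1]; ring
  have hf2 : f (Circle.exp (2*π/3)) = π/3 := by
    rw [hfg, (GH_F le_rfl (by linarith)).1]; ring
  have hint0 := integrable_dS1 (Circle.exp 0) ν
  have hint1 := integrable_dS1 (Circle.exp (π/3)) ν
  have hint2 := integrable_dS1 (Circle.exp (2*π/3)) ν
  have hzero : (0:ℝ) = ∫ y, (dS1 (Circle.exp 0) y - dS1 (Circle.exp (π/3)) y
      + dS1 (Circle.exp (2*π/3)) y) ∂ν := by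
    have hint01 : Integrable (fun y => dS1 (Circle.exp 0) y - dS1 (Circle.exp (π/3)) y) ν :=
      hint0.sub hint1
    rw [integral_add hint01 hint2, integral_sub hint0 hint1,
      ← hrep _, ← hrep _, ← hrep _, hf0, hf1, hf2]
    ring
  have hmono : ∫ (_ : Circle), (π/3 : ℝ) ∂ν ≤ ∫ y, (dS1 (Circle.exp 0) y - dS1 (Circle.exp (π/3)) y
      + dS1 (Circle.exp (2*π/3)) y) ∂ν :=
    integral_mono (integrable_const _)
      (((integrable_dS1 (Circle.exp 0) ν).sub (integrable_dS1 (Circle.exp (π/3)) ν)).add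
        (integrable_dS1 (Circle.exp (2*π/3)) ν)) hψ
  rw [integral_const, ← hzero] at hmono
  have htr : (ν Set.univ).toReal = 0 := by
    have h1 : (0:ℝ) ≤ (ν Set.univ).toReal := ENNReal.toReal_nonneg
    by_contra h
    have h2 : 0 < (ν Set.univ).toReal := lt_of_le_of_ne h1 (Ne.symm h)
    have : 0 < (ν Set.univ).toReal • (π/3 : ℝ) := by
      rw [smul_eq_mul]; positivity
    rw [measureReal_def] at hmono
    linarith
  have hν0 : ν = 0 := by
    have := ENNReal.toReal_eq_zero_iff (ν Set.univ)
    rw [htr] at this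
    rcases this.mp rfl with h | h
    · exact Measure.measure_univ_eq_zero.mp h
    · exact absurd h (measure_ne_top ν _)
  have := hrep (Circle.exp 0)
  rw [hν0, integral_zero_measure, hf0] at this
  linarith


/-- For `x_j = q(2πj/3)` and `f(x) = π/3 + min_j d(x, x_j)`, `f` satisfies
`f(x) + f(-x) = π`, is Lipschitz, left-differentiable with `‖∂₋f‖_{TV(S¹)} = 12`; hence
`f` is representable by a signed measure but by no non-negative finite Borel measure. -/
theorem stmt18 (f : Circle → ℝ)
    (hf : ∀ x : Circle, f x = π / 3 +
      min (dS1 x (Circle.exp 0))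
        (min (dS1 x (Circle.exp (2 * π / 3))) (dS1 x (Circle.exp (4 * π / 3))))) :
    (∀ x : Circle, f x + f (antipode x) = π) ∧
    LipschitzCircle f ∧
    (∃ f' : Circle → ℝ, (∀ x : Circle, HasLeftDerivCircleAt f (f' x) x) ∧
      circleTV f' = 12) ∧
    (∃ lam : SignedMeasure Circle, ∀ x : Circle, f x = fRep lam x) ∧
    ¬ ∃ ν : Measure Circle, IsFiniteMeasure ν ∧ ∀ x : Circle, f x = ∫ y, dS1 x y ∂ν := by
  have hfg : ∀ u : ℝ, f (Circle.exp u) = Gfun u := by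
    intro u
    rw [hf]
    unfold Gfun
    rw [dS1_exp, dS1_exp, dS1_exp, sub_zero]
  exact ⟨fun x => part1 hfg x, part2 hfg,
    ⟨fP, fun x => hasLeftDeriv hfg x, circleTV_fP⟩, part4 hfg, part5 hfg⟩

end CirclePaper
end
end
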